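/- arXiv:0909.0816 — 6 statements merged into one kernel-verified Lean document; each statement's English description precedes it below -/
import Mathlib

section
/- Let {A_i}_{i≥0} be chain complexes over F_2 and {f_i : A_i → A_{i+1}} chain maps. Suppose (i) for each i there are F_2-linear maps H_i : A_i → A_{i+2} raising degree by 1 with d∘H_i + H_i∘d = f_{i+1}∘f_i (so f_{i+1}∘f_i is null-homotopic via H_i), and (ii) for each i the map ψ_i = f_{i+2}∘H_i + H_{i+1}∘f_i : A_i → A_{i+3} (which is a chain map) is a quasi-isomorphism. Then the induced sequence on homology ⋯ → H_*(A_i) → H_*(A_{i+1}) → H_*(A_{i+2}) → ⋯ is exact: for every i ≥ 1 and every degree, the image of the map induced by f_{i-1} on homology equals the kernel of the map induced by f_i. -/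
private lemma char2_add_self {M : Type*} [AddCommGroup M] [Module (ZMod 2) M] (x : M) :
    x + x = 0 := by
  have h : ((2 : ZMod 2)) • x = x + x := two_smul (ZMod 2) x
  rw [show ((2 : ZMod 2)) = 0 from rfl, zero_smul] at h
  exact h.symm

private lemma char2_rearrange {M : Type*} [AddCommGroup M] [Module (ZMod 2) M] {a b c : M}
    (h : a + b = c) : b = c + a := by
  rw [← h, add_comm a b, add_assoc, char2_add_self, add_zero]

private lemma char2_aux {M : Type*} [AddCommGroup M] [Module (ZMod 2) M] (a b : M) :
    a = b + a + b := by
  rw [add_comm b a, add_assoc, char2_add_self, add_zero]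


/-- **Exactness from the triangle-detection data (Lemma on surgery triangles).**
A chain complex over `F₂ = ZMod 2` is given by spaces `A i n` (for the `i`-th complex,
`i : ℕ`, in degree `n : ℤ`) with differentials `d i n : A i (n+1) →ₗ A i n` squaring to
zero.  Given chain maps `f i : A i → A (i+1)`, degree-one maps `H i : A i → A (i+2)`
with `d ∘ H + H ∘ d = f (i+1) ∘ f i`, such that each
`ψ i = f (i+2) ∘ H i + H (i+1) ∘ f i : A i → A (i+3)` (a degree-one chain map) is a
quasi-isomorphism (stated element-wise on homology: surjective and injective on homology
classes), the induced sequence on homology is exact: for every `i` and every degree,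
the image of the map induced by `f i` equals the kernel of the map induced by `f (i+1)`
(element-wise: a cycle `x` of `A (i+1)` has `f (i+1) x` a boundary iff `x` agrees, modulo
boundaries, with the image of a cycle of `A i`). -/
theorem exactness_of_homology_triangle
    (A : ℕ → ℤ → Type*)
    [∀ i n, AddCommGroup (A i n)] [∀ i n, Module (ZMod 2) (A i n)]
    (d : ∀ (i : ℕ) (n : ℤ), A i (n + 1) →ₗ[ZMod 2] A i n)
    (hd : ∀ (i : ℕ) (n : ℤ) (x : A i (n + 1 + 1)), d i n (d i (n + 1) x) = 0)
    (f : ∀ (i : ℕ) (n : ℤ), A i n →ₗ[ZMod 2] A (i + 1) n)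
    (hf : ∀ (i : ℕ) (n : ℤ) (x : A i (n + 1)),
      d (i + 1) n (f i (n + 1) x) = f i n (d i n x))
    (H : ∀ (i : ℕ) (n : ℤ), A i n →ₗ[ZMod 2] A (i + 2) (n + 1))
    (hH : ∀ (i : ℕ) (n : ℤ) (x : A i (n + 1)),
      d (i + 2) (n + 1) (H i (n + 1) x) + H i n (d i n x)
        = f (i + 1) (n + 1) (f i (n + 1) x))
    -- ψ i = f (i+2) ∘ H i + H (i+1) ∘ f i is surjective on homology:
    (hψsurj : ∀ (i : ℕ) (n : ℤ) (y : A (i + 3) (n + 1 + 1)), d (i + 3) (n + 1) y = 0 →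
      ∃ x : A i (n + 1), d i n x = 0 ∧
        ∃ z : A (i + 3) (n + 1 + 1 + 1),
          f (i + 2) (n + 1 + 1) (H i (n + 1) x) + H (i + 1) (n + 1) (f i (n + 1) x) + y
            = d (i + 3) (n + 1 + 1) z)
    -- ψ i is injective on homology:
    (hψinj : ∀ (i : ℕ) (n : ℤ) (x : A i (n + 1)), d i n x = 0 →
      (∃ z : A (i + 3) (n + 1 + 1 + 1),
          f (i + 2) (n + 1 + 1) (H i (n + 1) x) + H (i + 1) (n + 1) (f i (n + 1) x)
            = d (i + 3) (n + 1 + 1) z) →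
      ∃ w : A i (n + 1 + 1), x = d i (n + 1) w) :
    -- exactness on homology: image of (f i)_* equals kernel of (f (i+1))_*
    ∀ (i : ℕ) (n : ℤ) (x : A (i + 1) (n + 1)), d (i + 1) n x = 0 →
      ((∃ z : A (i + 2) (n + 1 + 1), f (i + 1) (n + 1) x = d (i + 2) (n + 1) z) ↔
        (∃ y : A i (n + 1), d i n y = 0 ∧
          ∃ z : A (i + 1) (n + 1 + 1), f i (n + 1) y + x = d (i + 1) (n + 1) z)) := by
  intro i n x hx
  constructor
  · rintro ⟨z, hz⟩
    have hdy' : d (i+3) (n+1) (f (i+2) (n+1+1) z + H (i+1) (n+1) x) = 0 := by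
      have h1 := hf (i+2) (n+1) z
      have h2 := hH (i+1) n x
      rw [hx, map_zero, add_zero] at h2
      rw [map_add, h1, h2, ← hz]
      exact char2_add_self _
    obtain ⟨y, hy, z', hz'⟩ := hψsurj i n _ hdy'
    have h3 := hH i n y
    rw [hy, map_zero, add_zero] at h3
    have hdu : d (i+1) n (f i (n+1) y + x) = 0 := by
      rw [map_add, hf i n y, hy, map_zero, hx, add_zero]
    have hfw : f (i+1) (n+1) (f i (n+1) y + x) = d (i+2) (n+1) (z + H i (n+1) y) := by
      rw [map_add, map_add, ← h3, hz]
      abel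
    have hψu : f (i+3) (n+1+1) (H (i+1) (n+1) (f i (n+1) y + x))
        + H (i+2) (n+1) (f (i+1) (n+1) (f i (n+1) y + x))
        = d (i+4) (n+1+1)
            (f (i+3) (n+1+1+1) z' + H (i+2) (n+1+1) (z + H i (n+1) y)) := by
      have hB := char2_rearrange (hH (i+2) (n+1) (z + H i (n+1) y))
      have hC := hf (i+3) (n+1+1) z'
      rw [hfw, hB, map_add (d (i+4) (n+1+1)), hC, ← hz']
      simp only [map_add]
      abel
    obtain ⟨w0, hw0⟩ := hψinj (i+1) n (f i (n+1) y + x) hdu ⟨_, hψu⟩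
    exact ⟨y, hy, w0, hw0⟩
  · rintro ⟨y, hy, z, hz⟩
    refine ⟨f (i+1) (n+1+1) z + H i (n+1) y, ?_⟩
    have h3 := hH i n y
    rw [hy, map_zero, add_zero] at h3
    have h4 := hf (i+1) (n+1) z
    rw [map_add, h4, h3, ← hz, map_add]
    exact char2_aux _ _
end

section
/- Let {A_i}_{i≥0} be chain complexes over F_2 and {f_i : A_i → A_{i+1}} chain maps. Suppose (i) for each i there are F_2-linear maps H_i : A_i → A_{i+2} raising degree by 1 with d∘H_i + H_i∘d = f_{i+1}∘f_i, and (ii) for each i the chain map ψ_i = f_{i+2}∘H_i + H_{i+1}∘f_i : A_i → A_{i+3} is a quasi-isomorphism. Then the map Cone(f_1) → A_3 given in degree n by (a_1, a_2) ↦ H_1(a_1) + f_2(a_2) (where a_1 ∈ (A_1)_{n-1} and a_2 ∈ (A_2)_n) is a chain map and is a quasi-isomorphism; i.e. the mapping cone of f_1 is quasi-isomorphic to A_3 via the map with components H_1 and f_2. -/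
/-- **The mapping cone of `f 1` is quasi-isomorphic to `A 3` via `(H 1, f 2)`.**
Chain complexes over `F₂ = ZMod 2` are given by spaces `A i n` with differentials
`d i n : A i (n+1) →ₗ A i n` squaring to zero.  Given chain maps `f i : A i → A (i+1)`,
degree-one maps `H i : A i → A (i+2)` with `d ∘ H + H ∘ d = f (i+1) ∘ f i`, such that each
`ψ i = f (i+2) ∘ H i + H (i+1) ∘ f i : A i → A (i+3)` is a quasi-isomorphism, the map
`Cone(f 1) → A 3` given in degree `n` by `(a₁, a₂) ↦ H 1 a₁ + f 2 a₂`
(with `a₁ ∈ (A 1)_{n-1}`, `a₂ ∈ (A 2)_n`, and `Cone(f 1)_n = (A 1)_{n-1} ⊕ (A 2)_n`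
with differential `(a,b) ↦ (d a, f 1 a + d b)`) is a chain map and a quasi-isomorphism
(stated element-wise: commutation with the differentials, surjectivity on homology, and
injectivity on homology). -/
theorem cone_quasiIso_of_triangle
    (A : ℕ → ℤ → Type*)
    [∀ i n, AddCommGroup (A i n)] [∀ i n, Module (ZMod 2) (A i n)]
    (d : ∀ (i : ℕ) (n : ℤ), A i (n + 1) →ₗ[ZMod 2] A i n)
    (hd : ∀ (i : ℕ) (n : ℤ) (x : A i (n + 1 + 1)), d i n (d i (n + 1) x) = 0)
    (f : ∀ (i : ℕ) (n : ℤ), A i n →ₗ[ZMod 2] A (i + 1) n)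
    (hf : ∀ (i : ℕ) (n : ℤ) (x : A i (n + 1)),
      d (i + 1) n (f i (n + 1) x) = f i n (d i n x))
    (H : ∀ (i : ℕ) (n : ℤ), A i n →ₗ[ZMod 2] A (i + 2) (n + 1))
    (hH : ∀ (i : ℕ) (n : ℤ) (x : A i (n + 1)),
      d (i + 2) (n + 1) (H i (n + 1) x) + H i n (d i n x)
        = f (i + 1) (n + 1) (f i (n + 1) x))
    -- ψ i = f (i+2) ∘ H i + H (i+1) ∘ f i is surjective on homology:
    (hψsurj : ∀ (i : ℕ) (n : ℤ) (y : A (i + 3) (n + 1 + 1)), d (i + 3) (n + 1) y = 0 →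
      ∃ x : A i (n + 1), d i n x = 0 ∧
        ∃ z : A (i + 3) (n + 1 + 1 + 1),
          f (i + 2) (n + 1 + 1) (H i (n + 1) x) + H (i + 1) (n + 1) (f i (n + 1) x) + y
            = d (i + 3) (n + 1 + 1) z)
    -- ψ i is injective on homology:
    (hψinj : ∀ (i : ℕ) (n : ℤ) (x : A i (n + 1)), d i n x = 0 →
      (∃ z : A (i + 3) (n + 1 + 1 + 1),
          f (i + 2) (n + 1 + 1) (H i (n + 1) x) + H (i + 1) (n + 1) (f i (n + 1) x)
            = d (i + 3) (n + 1 + 1) z) →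
      ∃ w : A i (n + 1 + 1), x = d i (n + 1) w) :
    -- (1) `(a, b) ↦ H 1 a + f 2 b` is a chain map from the cone of `f 1` to `A 3`:
    (∀ (n : ℤ) (a : A 1 (n + 1)) (b : A 2 (n + 1 + 1)),
      H 1 n (d 1 n a) + f 2 (n + 1) (f 1 (n + 1) a + d 2 (n + 1) b)
        = d 3 (n + 1) (H 1 (n + 1) a + f 2 (n + 1 + 1) b)) ∧
    -- (2) it is surjective on homology:
    (∀ (n : ℤ) (y : A 3 (n + 1 + 1)), d 3 (n + 1) y = 0 →
      ∃ (a : A 1 (n + 1)) (b : A 2 (n + 1 + 1)),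
        d 1 n a = 0 ∧ f 1 (n + 1) a + d 2 (n + 1) b = 0 ∧
        ∃ z : A 3 (n + 1 + 1 + 1),
          H 1 (n + 1) a + f 2 (n + 1 + 1) b + y = d 3 (n + 1 + 1) z) ∧
    -- (3) it is injective on homology:
    (∀ (n : ℤ) (a : A 1 (n + 1)) (b : A 2 (n + 1 + 1)),
      d 1 n a = 0 → f 1 (n + 1) a + d 2 (n + 1) b = 0 →
      (∃ z : A 3 (n + 1 + 1 + 1),
        H 1 (n + 1) a + f 2 (n + 1 + 1) b = d 3 (n + 1 + 1) z) →
      ∃ (a' : A 1 (n + 1 + 1)) (b' : A 2 (n + 1 + 1 + 1)),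
        a = d 1 (n + 1) a' ∧ b = f 1 (n + 1 + 1) a' + d 2 (n + 1 + 1) b') := by
  
  refine ⟨?_, ?_, ?_⟩
  · -- chain map
    intro n a b
    have h1 := hH 1 n a
    have h2 := hf 2 (n + 1) b
    simp only [map_add]
    linear_combination (norm := (match_scalars <;> decide))
      (1 : ZMod 2) • h1 + (1 : ZMod 2) • h2
  · -- surjective on homology
    intro n y hy
    obtain ⟨x, hx, z, hz⟩ := hψsurj 0 n y hy
    refine ⟨f 0 (n + 1) x, H 0 (n + 1) x, ?_, ?_, z, ?_⟩
    · rw [hf 0 n x, hx, map_zero]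
    · have h1 := hH 0 n x
      have h2 := congrArg (H 0 n) hx
      rw [map_zero] at h2
      linear_combination (norm := (match_scalars <;> decide))
        (1 : ZMod 2) • h1 + (1 : ZMod 2) • h2
    · linear_combination (norm := (match_scalars <;> decide)) (1 : ZMod 2) • hz
  · -- injective on homology
    intro n a b ha hb ⟨z, hz⟩
    -- Step 1: a is a boundary, via injectivity of ψ₁
    obtain ⟨a', ha'⟩ := hψinj 1 n a ha ⟨f 3 (n + 1 + 1 + 1) z + H 2 (n + 1 + 1) b, by
      have c1 := congrArg (f 3 (n + 1 + 1)) hz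
      rw [map_add] at c1
      have c2 := hf 3 (n + 1 + 1) z
      have c3 := hH 2 (n + 1) b
      have c4 := congrArg (H 2 (n + 1)) hb
      rw [map_add, map_zero] at c4
      simp only [map_add]
      linear_combination (norm := (match_scalars <;> decide))
        (1 : ZMod 2) • c1 + (1 : ZMod 2) • c2 + (1 : ZMod 2) • c3 + (1 : ZMod 2) • c4⟩
    -- c := b + f 1 a' is a cycle
    have dc0 : d 2 (n + 1) (b + f 1 (n + 1 + 1) a') = 0 := by
      have c1 := hf 1 (n + 1) a'
      have c2 := congrArg (f 1 (n + 1)) ha'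
      rw [map_add]
      linear_combination (norm := (match_scalars <;> decide))
        (1 : ZMod 2) • hb + (1 : ZMod 2) • c1 + (1 : ZMod 2) • c2
    -- f 2 c = d u, where u := z + H 1 a'
    have f2c : f 2 (n + 1 + 1) (b + f 1 (n + 1 + 1) a')
        = d 3 (n + 1 + 1) (z + H 1 (n + 1 + 1) a') := by
      have c1 := hH 1 (n + 1) a'
      have c2 := congrArg (H 1 (n + 1)) ha'
      simp only [map_add]
      linear_combination (norm := (match_scalars <;> decide))
        (1 : ZMod 2) • hz + (1 : ZMod 2) • c1 + (1 : ZMod 2) • c2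
    -- v := H 2 c + f 3 u is a cycle in A 4
    have dv0 : d 4 (n + 1 + 1)
        (H 2 (n + 1 + 1) (b + f 1 (n + 1 + 1) a')
          + f 3 (n + 1 + 1 + 1) (z + H 1 (n + 1 + 1) a')) = 0 := by
      have c1 := hH 2 (n + 1) (b + f 1 (n + 1 + 1) a')
      rw [dc0, map_zero] at c1
      have c2 := hf 3 (n + 1 + 1) (z + H 1 (n + 1 + 1) a')
      have c3 := congrArg (f 3 (n + 1 + 1)) f2c
      rw [map_add]
      linear_combination (norm := (match_scalars <;> decide))
        (1 : ZMod 2) • c1 + (1 : ZMod 2) • c2 + (1 : ZMod 2) • c3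
    -- Step 2: kill v up to a boundary using surjectivity of ψ₁
    obtain ⟨x, hx, z₂, hz₂⟩ := hψsurj 1 (n + 1)
      (H 2 (n + 1 + 1) (b + f 1 (n + 1 + 1) a')
        + f 3 (n + 1 + 1 + 1) (z + H 1 (n + 1 + 1) a')) dv0
    -- Step 3: c + f 1 x is a boundary, via injectivity of ψ₂
    obtain ⟨b', hb'⟩ := hψinj 2 (n + 1) (b + f 1 (n + 1 + 1) a' + f 1 (n + 1 + 1) x)
      (by
        have c1 := hf 1 (n + 1) x
        rw [hx, map_zero] at c1
        simp only [map_add, dc0, c1, add_zero, zero_add])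
      ⟨H 3 (n + 1 + 1 + 1) (H 1 (n + 1 + 1) x) + f 4 (n + 1 + 1 + 1 + 1) z₂
          + H 3 (n + 1 + 1 + 1) (z + H 1 (n + 1 + 1) a'), by
        have e1 := congrArg (H 3 (n + 1 + 1)) f2c
        simp only [map_add] at e1
        have e2 := hH 3 (n + 1 + 1) (z + H 1 (n + 1 + 1) a')
        simp only [map_add] at e2
        have e3 := congrArg (f 4 (n + 1 + 1 + 1)) hz₂
        simp only [map_add] at e3
        have e4 := hf 4 (n + 1 + 1 + 1) z₂
        have e5 := hH 3 (n + 1 + 1) (H 1 (n + 1 + 1) x)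
        have e6' : d 3 (n + 1 + 1) (H 1 (n + 1 + 1) x)
            = f 2 (n + 1 + 1) (f 1 (n + 1 + 1) x) := by
          have := hH 1 (n + 1) x
          rw [hx, map_zero, add_zero] at this
          exact this
        have e6 := congrArg (H 3 (n + 1 + 1)) e6'
        simp only [map_add]
        linear_combination (norm := (match_scalars <;> decide))
          (1 : ZMod 2) • e1 + (1 : ZMod 2) • e2 + (1 : ZMod 2) • e3
            + (1 : ZMod 2) • e4 + (1 : ZMod 2) • e5 + (1 : ZMod 2) • e6⟩
    refine ⟨a' + x, b', ?_, ?_⟩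
    · rw [map_add, hx, add_zero]; exact ha'
    · simp only [map_add]
      linear_combination (norm := (match_scalars <;> decide)) (1 : ZMod 2) • hb'
end

section
/- With the data and definitions of the Morse-theoretic model below, the composite d-check ∘ d-check : C^o ⊕ C^s → C^o ⊕ C^s equals A-check. (In particular, over F_2 the square of d-check is expressed entirely in terms of the six relation elements A^o_o, A^o_s, A^u_o, A^u_s, Abar^s_s, Abar^s_u.) -/
/-- **The square of the Morse-theoretic differential equals the relation operator
`A-check` (path-algebra identity over `F₂`).**
`Co`, `Cs`, `Cu` are model spaces of interior, boundary-stable and boundary-unstable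
critical points, with the eight trajectory-counting maps.  The differential
`d-check` on `Co ⊕ Cs` is given by the matrix `[[doo, duo∘esu],[dos, ess + dus∘esu]]`,
and `d-check ∘ d-check = A-check`, where `A-check` is assembled from the six relation
elements as in the statement. -/
theorem dCheck_comp_dCheck_eq_ACheck {Co Cs Cu : Type*}
    [AddCommGroup Co] [AddCommGroup Cs] [AddCommGroup Cu]
    [Module (ZMod 2) Co] [Module (ZMod 2) Cs] [Module (ZMod 2) Cu]
    (doo : Co →ₗ[ZMod 2] Co) (dos : Co →ₗ[ZMod 2] Cs)
    (duo : Cu →ₗ[ZMod 2] Co) (dus : Cu →ₗ[ZMod 2] Cs)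
    (ess : Cs →ₗ[ZMod 2] Cs) (esu : Cs →ₗ[ZMod 2] Cu)
    (eus : Cu →ₗ[ZMod 2] Cs) (euu : Cu →ₗ[ZMod 2] Cu) :
    let Aoo : Co →ₗ[ZMod 2] Co := doo ∘ₗ doo + duo ∘ₗ esu ∘ₗ dos
    let Aos : Co →ₗ[ZMod 2] Cs := dos ∘ₗ doo + ess ∘ₗ dos + dus ∘ₗ esu ∘ₗ dos
    let Auo : Cu →ₗ[ZMod 2] Co := doo ∘ₗ duo + duo ∘ₗ euu + duo ∘ₗ esu ∘ₗ dus
    let Aus : Cu →ₗ[ZMod 2] Cs :=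
      eus + dos ∘ₗ duo + ess ∘ₗ dus + dus ∘ₗ euu + dus ∘ₗ esu ∘ₗ dus
    let Abss : Cs →ₗ[ZMod 2] Cs := ess ∘ₗ ess + eus ∘ₗ esu
    let Absu : Cs →ₗ[ZMod 2] Cu := esu ∘ₗ ess + euu ∘ₗ esu
    let dCheck : Co × Cs →ₗ[ZMod 2] Co × Cs :=
      LinearMap.prod
        (doo ∘ₗ LinearMap.fst (ZMod 2) Co Cs
          + (duo ∘ₗ esu) ∘ₗ LinearMap.snd (ZMod 2) Co Cs)
        (dos ∘ₗ LinearMap.fst (ZMod 2) Co Cs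
          + (ess + dus ∘ₗ esu) ∘ₗ LinearMap.snd (ZMod 2) Co Cs)
    let ACheck : Co × Cs →ₗ[ZMod 2] Co × Cs :=
      LinearMap.prod
        (Aoo ∘ₗ LinearMap.fst (ZMod 2) Co Cs
          + (Auo ∘ₗ esu + duo ∘ₗ Absu) ∘ₗ LinearMap.snd (ZMod 2) Co Cs)
        (Aos ∘ₗ LinearMap.fst (ZMod 2) Co Cs
          + (Abss + Aus ∘ₗ esu + dus ∘ₗ Absu) ∘ₗ LinearMap.snd (ZMod 2) Co Cs)
    dCheck ∘ₗ dCheck = ACheck := by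
  intro Aoo Aos Auo Aus Abss Absu dCheck ACheck
  have hCo : ∀ v : Co, v + v = 0 := fun v => by
    calc v + v = (2 : ZMod 2) • v := (two_smul _ v).symm
    _ = 0 := by rw [show (2 : ZMod 2) = 0 from rfl, zero_smul]
  have hCs : ∀ v : Cs, v + v = 0 := fun v => by
    calc v + v = (2 : ZMod 2) • v := (two_smul _ v).symm
    _ = 0 := by rw [show (2 : ZMod 2) = 0 from rfl, zero_smul]
  ext x <;>
  · simp only [dCheck, ACheck, Aoo, Aos, Auo, Aus, Abss, Absu, LinearMap.comp_apply,
      LinearMap.add_apply, LinearMap.prod_apply, Function.prod, LinearMap.fst_apply,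
      LinearMap.snd_apply, map_add]
    abel_nf
    simp [two_nsmul, two_zsmul, hCo, hCs]
end

section
/- With the data and definitions of the Morse-theoretic model below, if the six relation elements A^o_o, A^o_s, A^u_o, A^u_s, Abar^s_s, Abar^s_u are all zero, then d-check ∘ d-check = 0; that is, (C^o ⊕ C^s, d-check) is a chain complex over F_2. -/
private lemma add_self_char2 {M : Type*} [AddCommGroup M] [Module (ZMod 2) M] (a : M) :
    a + a = 0 := by
  have h2 : (2 : ZMod 2) = 0 := by decide
  calc a + a = (2 : ZMod 2) • a := (two_smul _ a).symm
    _ = 0 := by rw [h2, zero_smul]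

private lemma two_zsmul_char2 {M : Type*} [AddCommGroup M] [Module (ZMod 2) M] (a : M) :
    (2 : ℤ) • a = 0 := by
  rw [two_zsmul]; exact add_self_char2 a

/-- **If the six Morse-theoretic relation elements vanish, then `d-check` is a
differential on `Co ⊕ Cs` over `F₂`.** -/
theorem dCheck_squared_eq_zero {Co Cs Cu : Type*}
    [AddCommGroup Co] [AddCommGroup Cs] [AddCommGroup Cu]
    [Module (ZMod 2) Co] [Module (ZMod 2) Cs] [Module (ZMod 2) Cu]
    (doo : Co →ₗ[ZMod 2] Co) (dos : Co →ₗ[ZMod 2] Cs)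
    (duo : Cu →ₗ[ZMod 2] Co) (dus : Cu →ₗ[ZMod 2] Cs)
    (ess : Cs →ₗ[ZMod 2] Cs) (esu : Cs →ₗ[ZMod 2] Cu)
    (eus : Cu →ₗ[ZMod 2] Cs) (euu : Cu →ₗ[ZMod 2] Cu)
    (hAoo : doo ∘ₗ doo + duo ∘ₗ esu ∘ₗ dos = 0)
    (hAos : dos ∘ₗ doo + ess ∘ₗ dos + dus ∘ₗ esu ∘ₗ dos = 0)
    (hAuo : doo ∘ₗ duo + duo ∘ₗ euu + duo ∘ₗ esu ∘ₗ dus = 0)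
    (hAus : eus + dos ∘ₗ duo + ess ∘ₗ dus + dus ∘ₗ euu + dus ∘ₗ esu ∘ₗ dus = 0)
    (hAbss : ess ∘ₗ ess + eus ∘ₗ esu = 0)
    (hAbsu : esu ∘ₗ ess + euu ∘ₗ esu = 0) :
    let dCheck : Co × Cs →ₗ[ZMod 2] Co × Cs :=
      LinearMap.prod
        (doo ∘ₗ LinearMap.fst (ZMod 2) Co Cs
          + (duo ∘ₗ esu) ∘ₗ LinearMap.snd (ZMod 2) Co Cs)
        (dos ∘ₗ LinearMap.fst (ZMod 2) Co Cs
          + (ess + dus ∘ₗ esu) ∘ₗ LinearMap.snd (ZMod 2) Co Cs)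
    dCheck ∘ₗ dCheck = 0 := by
  intro dCheck
  apply LinearMap.ext
  rintro ⟨a, b⟩
  have h1 := LinearMap.congr_fun hAoo a
  have h2 := LinearMap.congr_fun hAos a
  have h3 := LinearMap.congr_fun hAuo (esu b)
  have h4 := LinearMap.congr_fun hAus (esu b)
  have h5 := LinearMap.congr_fun hAbss b
  have h6 := congrArg dus (LinearMap.congr_fun hAbsu b)
  have h7 := congrArg duo (LinearMap.congr_fun hAbsu b)
  simp only [LinearMap.comp_apply, LinearMap.add_apply, LinearMap.zero_apply, map_add,
    map_zero] at h1 h2 h3 h4 h5 h6 h7 ⊢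
  simp only [dCheck, LinearMap.prod_apply, LinearMap.comp_apply, LinearMap.add_apply,
    Function.prod, LinearMap.fst_apply, LinearMap.snd_apply, map_add]
  refine Prod.ext ?_ ?_
  · show doo (doo a) + doo (duo (esu b)) + (duo (esu (dos a)) +
        (duo (esu (ess b)) + duo (esu (dus (esu b))))) = 0
    have key : doo (doo a) + doo (duo (esu b)) + (duo (esu (dos a)) +
        (duo (esu (ess b)) + duo (esu (dus (esu b))))) =
        (doo (doo a) + duo (esu (dos a))) + ((doo (duo (esu b)) + duo (euu (esu b))
          + duo (esu (dus (esu b)))) + (duo (esu (ess b)) + duo (euu (esu b)))) := by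
      abel_nf
      simp [two_zsmul_char2]
    rw [key, h1, h3, h7]
    simp
  · show dos (doo a) + dos (duo (esu b)) + (ess (dos a) + dus (esu (dos a)) +
        (ess (ess b) + dus (esu (ess b)) + (ess (dus (esu b)) + dus (esu (dus (esu b)))))) = 0
    have key : dos (doo a) + dos (duo (esu b)) + (ess (dos a) + dus (esu (dos a)) +
        (ess (ess b) + dus (esu (ess b)) + (ess (dus (esu b)) + dus (esu (dus (esu b)))))) =
        (dos (doo a) + ess (dos a) + dus (esu (dos a)))
        + ((eus (esu b) + dos (duo (esu b)) + ess (dus (esu b)) + dus (euu (esu b))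
            + dus (esu (dus (esu b))))
          + ((ess (ess b) + eus (esu b)) + (dus (esu (ess b)) + dus (euu (esu b))))) := by
      abel_nf
      simp [two_zsmul_char2]
    rw [key, h2, h4, h5, h6]
    simp
end

section
/- With the hypercube data and definitions below, suppose that for every pair I ≤ J in {0,1}^l the six boundary-counting components A^o_o(I,J), A^o_s(I,J), A^u_o(I,J), A^u_s(I,J), Abar^s_s(I,J), Abar^s_u(I,J) are all zero. Let X = ⊕_{I ∈ {0,1}^l} (C^o_I ⊕ C^s_I) and let D-check : X → X be the map whose component from the I-summand to the J-summand is D-check(I,J) when I ≤ J and zero otherwise. Then D-check ∘ D-check = 0, and D-check preserves the decreasing filtration F^i X = ⊕_{w(I) ≥ i} (C^o_I ⊕ C^s_I); that is, (X, D-check, F) is a filtered chain complex over F_2. -/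
section helpers
variable {M N P : Type*} [AddCommGroup M] [AddCommGroup N] [AddCommGroup P]
  [Module (ZMod 2) M] [Module (ZMod 2) N] [Module (ZMod 2) P]

lemma char2_addself (x : M) : x + x = 0 := by
  have h : (2 : ZMod 2) • x = 0 := by rw [show (2:ZMod 2) = 0 from rfl, zero_smul]
  simpa [two_smul] using h

lemma char2_eq_of_add_eq_zero {x y : M} (h : x + y = 0) : x = y := by
  have hy : -y = y := neg_eq_of_add_eq_zero_left (char2_addself y)
  rw [add_eq_zero_iff_eq_neg] at h
  rw [h, hy]

lemma sum_comp' {ι : Type*} (s : Finset ι) (f : ι → (N →ₗ[ZMod 2] P)) (g : M →ₗ[ZMod 2] N) :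
    (∑ i ∈ s, f i) ∘ₗ g = ∑ i ∈ s, f i ∘ₗ g := by
  ext x; simp

lemma comp_sum' {ι : Type*} (g : N →ₗ[ZMod 2] P) (s : Finset ι) (f : ι → (M →ₗ[ZMod 2] N)) :
    g ∘ₗ (∑ i ∈ s, f i) = ∑ i ∈ s, g ∘ₗ f i := by
  ext x; simp

omit [Module (ZMod 2) M] in
lemma sum_Icc_swap {α : Type*} [Preorder α] [LocallyFiniteOrder α] (P Q : α)
    (f : α → α → M) :
    ∑ m ∈ Finset.Icc P Q, ∑ n ∈ Finset.Icc P m, f m n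
      = ∑ n ∈ Finset.Icc P Q, ∑ m ∈ Finset.Icc n Q, f m n := by
  refine Finset.sum_comm' ?_
  intro x y
  simp only [Finset.mem_Icc]
  constructor
  · rintro ⟨⟨h1, h2⟩, h3, h4⟩; exact ⟨⟨h4, h2⟩, h3, h4.trans h2⟩
  · rintro ⟨⟨h1, h2⟩, h3, h4⟩; exact ⟨⟨h3.trans h1, h2⟩, h3, h1⟩

omit [Module (ZMod 2) M] in
lemma sum_Iic_swap {α : Type*} [Preorder α] [LocallyFiniteOrder α] [LocallyFiniteOrderBot α]
    (Q : α) (f : α → α → M) :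
    ∑ m ∈ Finset.Iic Q, ∑ p ∈ Finset.Iic m, f m p
      = ∑ p ∈ Finset.Iic Q, ∑ m ∈ Finset.Icc p Q, f m p := by
  refine Finset.sum_comm' ?_
  intro x y
  simp only [Finset.mem_Iic, Finset.mem_Icc]
  constructor
  · rintro ⟨h1, h2⟩; exact ⟨⟨h2, h1⟩, h2.trans h1⟩
  · rintro ⟨⟨h1, h2⟩, h3⟩; exact ⟨h2, h1⟩

lemma sum_prod_eq {ι : Type*} (s : Finset ι)
    (f : ι → M →ₗ[ZMod 2] N) (g : ι → M →ₗ[ZMod 2] P) :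
    ∑ i ∈ s, LinearMap.prod (f i) (g i) = LinearMap.prod (∑ i ∈ s, f i) (∑ i ∈ s, g i) := by
  ext x <;> simp [Prod.fst_sum, Prod.snd_sum]

end helpers

section aux
variable {l : ℕ}
  (Co Cs Cu : (Fin l → Fin 2) → Type*)
  [∀ I, AddCommGroup (Co I)] [∀ I, AddCommGroup (Cs I)] [∀ I, AddCommGroup (Cu I)]
  [∀ I, Module (ZMod 2) (Co I)] [∀ I, Module (ZMod 2) (Cs I)]
  [∀ I, Module (ZMod 2) (Cu I)]
  (Doo : ∀ I J : Fin l → Fin 2, Co I →ₗ[ZMod 2] Co J)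
  (Dos : ∀ I J : Fin l → Fin 2, Co I →ₗ[ZMod 2] Cs J)
  (Duo : ∀ I J : Fin l → Fin 2, Cu I →ₗ[ZMod 2] Co J)
  (Dus : ∀ I J : Fin l → Fin 2, Cu I →ₗ[ZMod 2] Cs J)
  (Dbss : ∀ I J : Fin l → Fin 2, Cs I →ₗ[ZMod 2] Cs J)
  (Dbsu : ∀ I J : Fin l → Fin 2, Cs I →ₗ[ZMod 2] Cu J)
  (Dbus : ∀ I J : Fin l → Fin 2, Cu I →ₗ[ZMod 2] Cs J)
  (Dbuu : ∀ I J : Fin l → Fin 2, Cu I →ₗ[ZMod 2] Cu J)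

def Bo (P Q : Fin l → Fin 2) : Cs P →ₗ[ZMod 2] Co Q :=
  ∑ K ∈ Finset.Icc P Q, Duo K Q ∘ₗ Dbsu P K

def BsAux (P Q : Fin l → Fin 2) : Cs P →ₗ[ZMod 2] Cs Q :=
  ∑ K ∈ Finset.Icc P Q, Dus K Q ∘ₗ Dbsu P K

def DsAux (P Q : Fin l → Fin 2) : Cs P →ₗ[ZMod 2] Cs Q :=
  Dbss P Q + BsAux Cs Cu Dus Dbsu P Q

def DC (P Q : Fin l → Fin 2) : (Co P × Cs P) →ₗ[ZMod 2] (Co Q × Cs Q) :=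
  LinearMap.prod
    (Doo P Q ∘ₗ LinearMap.fst (ZMod 2) (Co P) (Cs P)
      + Bo Co Cs Cu Duo Dbsu P Q ∘ₗ LinearMap.snd (ZMod 2) (Co P) (Cs P))
    (Dos P Q ∘ₗ LinearMap.fst (ZMod 2) (Co P) (Cs P)
      + DsAux Cs Cu Dus Dbss Dbsu P Q ∘ₗ LinearMap.snd (ZMod 2) (Co P) (Cs P))

local notation "B₀" => Bo Co Cs Cu Duo Dbsu
local notation "B₁" => BsAux Cs Cu Dus Dbsu
local notation "Dσ" => DsAux Cs Cu Dus Dbss Dbsu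
local notation "𝒟" => DC Co Cs Cu Doo Dos Duo Dus Dbss Dbsu

lemma comp_eq (P M Q : Fin l → Fin 2) :
    𝒟 M Q ∘ₗ 𝒟 P M
      = LinearMap.prod
        ((Doo M Q ∘ₗ Doo P M + B₀ M Q ∘ₗ Dos P M) ∘ₗ
            LinearMap.fst (ZMod 2) (Co P) (Cs P)
          + (Doo M Q ∘ₗ B₀ P M + B₀ M Q ∘ₗ Dσ P M) ∘ₗ
            LinearMap.snd (ZMod 2) (Co P) (Cs P))
        ((Dos M Q ∘ₗ Doo P M + Dσ M Q ∘ₗ Dos P M) ∘ₗ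
            LinearMap.fst (ZMod 2) (Co P) (Cs P)
          + (Dos M Q ∘ₗ B₀ P M + Dσ M Q ∘ₗ Dσ P M) ∘ₗ
            LinearMap.snd (ZMod 2) (Co P) (Cs P)) := by
  ext x <;> simp [DC]

lemma comp_oo
    (hAoo : ∀ P Q : Fin l → Fin 2, P ≤ Q →
      (∑ K ∈ Finset.Icc P Q, Doo K Q ∘ₗ Doo P K)
        + (∑ K ∈ Finset.Icc P Q, ∑ M ∈ Finset.Icc K Q,
            Duo M Q ∘ₗ Dbsu K M ∘ₗ Dos P K) = 0)
    (P Q : Fin l → Fin 2) (hPQ : P ≤ Q) :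
    ∑ M ∈ Finset.Icc P Q, (Doo M Q ∘ₗ Doo P M + B₀ M Q ∘ₗ Dos P M) = 0 := by
  have h := hAoo P Q hPQ
  rw [Finset.sum_add_distrib]
  simp only [Bo, sum_comp', LinearMap.comp_assoc]
  exact h

lemma comp_so
    (hAos : ∀ P Q : Fin l → Fin 2, P ≤ Q →
      (∑ K ∈ Finset.Icc P Q, (Dos K Q ∘ₗ Doo P K + Dbss K Q ∘ₗ Dos P K))
        + (∑ K ∈ Finset.Icc P Q, ∑ M ∈ Finset.Icc K Q,
            Dus M Q ∘ₗ Dbsu K M ∘ₗ Dos P K) = 0)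
    (P Q : Fin l → Fin 2) (hPQ : P ≤ Q) :
    ∑ M ∈ Finset.Icc P Q, (Dos M Q ∘ₗ Doo P M + Dσ M Q ∘ₗ Dos P M) = 0 := by
  have h := hAos P Q hPQ
  simp only [DsAux, BsAux, LinearMap.add_comp, sum_comp', LinearMap.comp_assoc,
    Finset.sum_add_distrib] at h ⊢
  rw [← h]
  abel

lemma comp_os
    (hAuo : ∀ P Q : Fin l → Fin 2, P ≤ Q →
      (∑ K ∈ Finset.Icc P Q, (Doo K Q ∘ₗ Duo P K + Duo K Q ∘ₗ Dbuu P K))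
        + (∑ K ∈ Finset.Icc P Q, ∑ M ∈ Finset.Icc K Q,
            Duo M Q ∘ₗ Dbsu K M ∘ₗ Dus P K) = 0)
    (hAbsu : ∀ P Q : Fin l → Fin 2, P ≤ Q →
      (∑ K ∈ Finset.Icc P Q, (Dbsu K Q ∘ₗ Dbss P K + Dbuu K Q ∘ₗ Dbsu P K)) = 0)
    (P Q : Fin l → Fin 2) (hPQ : P ≤ Q) :
    ∑ M ∈ Finset.Icc P Q, (Doo M Q ∘ₗ B₀ P M + B₀ M Q ∘ₗ Dσ P M) = 0 := by
  rw [Finset.sum_add_distrib]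
  have hpiece1 : ∑ M ∈ Finset.Icc P Q, Doo M Q ∘ₗ B₀ P M
      = (∑ N ∈ Finset.Icc P Q, ∑ M ∈ Finset.Icc N Q,
            Duo M Q ∘ₗ (Dbuu N M ∘ₗ Dbsu P N))
        + ∑ N ∈ Finset.Icc P Q, ∑ M ∈ Finset.Icc N Q, ∑ K ∈ Finset.Icc M Q,
            Duo K Q ∘ₗ (Dbsu M K ∘ₗ (Dus N M ∘ₗ Dbsu P N)) := by
    have e1 : ∑ M ∈ Finset.Icc P Q, Doo M Q ∘ₗ B₀ P M
        = ∑ N ∈ Finset.Icc P Q, ∑ M ∈ Finset.Icc N Q,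
            (Doo M Q ∘ₗ Duo N M) ∘ₗ Dbsu P N := by
      simp only [Bo, comp_sum']
      rw [sum_Icc_swap P Q (fun m n => Doo m Q ∘ₗ (Duo n m ∘ₗ Dbsu P n))]
      simp only [← LinearMap.comp_assoc]
    rw [e1, ← Finset.sum_add_distrib]
    refine Finset.sum_congr rfl (fun N hN => ?_)
    have hNQ : N ≤ Q := (Finset.mem_Icc.mp hN).2
    have h := hAuo N Q hNQ
    rw [Finset.sum_add_distrib, add_assoc] at h
    have h2 := char2_eq_of_add_eq_zero h
    rw [← sum_comp' (Finset.Icc N Q) (fun M => Doo M Q ∘ₗ Duo N M) (Dbsu P N), h2,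
      LinearMap.add_comp]
    simp only [sum_comp', LinearMap.comp_assoc]
  have hpiece2 : ∑ M ∈ Finset.Icc P Q, B₀ M Q ∘ₗ Dσ P M
      = (∑ N ∈ Finset.Icc P Q, ∑ M ∈ Finset.Icc N Q,
            Duo M Q ∘ₗ (Dbsu N M ∘ₗ Dbss P N))
        + ∑ N ∈ Finset.Icc P Q, ∑ M ∈ Finset.Icc N Q, ∑ K ∈ Finset.Icc M Q,
            Duo K Q ∘ₗ (Dbsu M K ∘ₗ (Dus N M ∘ₗ Dbsu P N)) := by
    simp only [DsAux, BsAux, Bo, LinearMap.comp_add, comp_sum', sum_comp',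
      LinearMap.comp_assoc, Finset.sum_add_distrib]
    rw [sum_Icc_swap P Q (fun m n => ∑ K ∈ Finset.Icc m Q,
      Duo K Q ∘ₗ (Dbsu m K ∘ₗ (Dus n m ∘ₗ Dbsu P n)))]
  rw [hpiece1, hpiece2]
  have hU1T2a : (∑ N ∈ Finset.Icc P Q, ∑ M ∈ Finset.Icc N Q,
        Duo M Q ∘ₗ (Dbuu N M ∘ₗ Dbsu P N))
      + (∑ N ∈ Finset.Icc P Q, ∑ M ∈ Finset.Icc N Q,
        Duo M Q ∘ₗ (Dbsu N M ∘ₗ Dbss P N)) = 0 := by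
    rw [← sum_Icc_swap P Q (fun m n => Duo m Q ∘ₗ (Dbuu n m ∘ₗ Dbsu P n)),
      ← sum_Icc_swap P Q (fun m n => Duo m Q ∘ₗ (Dbsu n m ∘ₗ Dbss P n)),
      ← Finset.sum_add_distrib]
    refine Finset.sum_eq_zero (fun M hM => ?_)
    have hPM : P ≤ M := (Finset.mem_Icc.mp hM).1
    have h := hAbsu P M hPM
    have h' : ∑ N ∈ Finset.Icc P M, (Dbuu N M ∘ₗ Dbsu P N + Dbsu N M ∘ₗ Dbss P N) = 0 := by
      rw [← h]; exact Finset.sum_congr rfl (fun _ _ => add_comm _ _)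
    rw [← Finset.sum_add_distrib]
    calc ∑ n ∈ Finset.Icc P M,
          (Duo M Q ∘ₗ (Dbuu n M ∘ₗ Dbsu P n) + Duo M Q ∘ₗ (Dbsu n M ∘ₗ Dbss P n))
        = Duo M Q ∘ₗ ∑ n ∈ Finset.Icc P M,
            (Dbuu n M ∘ₗ Dbsu P n + Dbsu n M ∘ₗ Dbss P n) := by
          rw [comp_sum']; exact Finset.sum_congr rfl (fun _ _ => (LinearMap.comp_add _ _ _).symm)
      _ = 0 := by rw [h', LinearMap.comp_zero]
  calc (∑ N ∈ Finset.Icc P Q, ∑ M ∈ Finset.Icc N Q, Duo M Q ∘ₗ (Dbuu N M ∘ₗ Dbsu P N))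
        + (∑ N ∈ Finset.Icc P Q, ∑ M ∈ Finset.Icc N Q, ∑ K ∈ Finset.Icc M Q,
            Duo K Q ∘ₗ (Dbsu M K ∘ₗ (Dus N M ∘ₗ Dbsu P N)))
        + ((∑ N ∈ Finset.Icc P Q, ∑ M ∈ Finset.Icc N Q, Duo M Q ∘ₗ (Dbsu N M ∘ₗ Dbss P N))
          + ∑ N ∈ Finset.Icc P Q, ∑ M ∈ Finset.Icc N Q, ∑ K ∈ Finset.Icc M Q,
            Duo K Q ∘ₗ (Dbsu M K ∘ₗ (Dus N M ∘ₗ Dbsu P N)))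
      = ((∑ N ∈ Finset.Icc P Q, ∑ M ∈ Finset.Icc N Q, Duo M Q ∘ₗ (Dbuu N M ∘ₗ Dbsu P N))
          + (∑ N ∈ Finset.Icc P Q, ∑ M ∈ Finset.Icc N Q, Duo M Q ∘ₗ (Dbsu N M ∘ₗ Dbss P N)))
        + ((∑ N ∈ Finset.Icc P Q, ∑ M ∈ Finset.Icc N Q, ∑ K ∈ Finset.Icc M Q,
            Duo K Q ∘ₗ (Dbsu M K ∘ₗ (Dus N M ∘ₗ Dbsu P N)))
          + ∑ N ∈ Finset.Icc P Q, ∑ M ∈ Finset.Icc N Q, ∑ K ∈ Finset.Icc M Q,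
            Duo K Q ∘ₗ (Dbsu M K ∘ₗ (Dus N M ∘ₗ Dbsu P N))) := by abel
    _ = 0 := by rw [hU1T2a, char2_addself, add_zero]

lemma comp_ss
    (hAus : ∀ P Q : Fin l → Fin 2, P ≤ Q →
      Dbus P Q
        + (∑ K ∈ Finset.Icc P Q,
            (Dos K Q ∘ₗ Duo P K + Dbss K Q ∘ₗ Dus P K + Dus K Q ∘ₗ Dbuu P K))
        + (∑ K ∈ Finset.Icc P Q, ∑ M ∈ Finset.Icc K Q,
            Dus M Q ∘ₗ Dbsu K M ∘ₗ Dus P K) = 0)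
    (hAbss : ∀ P Q : Fin l → Fin 2, P ≤ Q →
      (∑ K ∈ Finset.Icc P Q, (Dbss K Q ∘ₗ Dbss P K + Dbus K Q ∘ₗ Dbsu P K)) = 0)
    (hAbsu : ∀ P Q : Fin l → Fin 2, P ≤ Q →
      (∑ K ∈ Finset.Icc P Q, (Dbsu K Q ∘ₗ Dbss P K + Dbuu K Q ∘ₗ Dbsu P K)) = 0)
    (P Q : Fin l → Fin 2) (hPQ : P ≤ Q) :
    ∑ M ∈ Finset.Icc P Q, (Dos M Q ∘ₗ B₀ P M + Dσ M Q ∘ₗ Dσ P M) = 0 := by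
  rw [Finset.sum_add_distrib]
  have hp1 : ∑ M ∈ Finset.Icc P Q, Dos M Q ∘ₗ B₀ P M
      = ∑ N ∈ Finset.Icc P Q, ∑ M ∈ Finset.Icc N Q,
          Dos M Q ∘ₗ (Duo N M ∘ₗ Dbsu P N) := by
    simp only [Bo, comp_sum']
    rw [sum_Icc_swap P Q (fun m n => Dos m Q ∘ₗ (Duo n m ∘ₗ Dbsu P n))]
  have hp2 : ∑ M ∈ Finset.Icc P Q, Dσ M Q ∘ₗ Dσ P M
      = (∑ M ∈ Finset.Icc P Q, Dbss M Q ∘ₗ Dbss P M)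
        + (∑ N ∈ Finset.Icc P Q, ∑ M ∈ Finset.Icc N Q,
            Dbss M Q ∘ₗ (Dus N M ∘ₗ Dbsu P N))
        + (∑ M ∈ Finset.Icc P Q, ∑ K ∈ Finset.Icc M Q,
            Dus K Q ∘ₗ (Dbsu M K ∘ₗ Dbss P M))
        + ∑ N ∈ Finset.Icc P Q, ∑ M ∈ Finset.Icc N Q, ∑ K ∈ Finset.Icc M Q,
            Dus K Q ∘ₗ (Dbsu M K ∘ₗ (Dus N M ∘ₗ Dbsu P N)) := by
    simp only [DsAux, BsAux, LinearMap.comp_add, LinearMap.add_comp, comp_sum', sum_comp',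
      LinearMap.comp_assoc, Finset.sum_add_distrib]
    rw [sum_Icc_swap P Q (fun m n => Dbss m Q ∘ₗ (Dus n m ∘ₗ Dbsu P n)),
      sum_Icc_swap P Q (fun m n => ∑ K ∈ Finset.Icc m Q,
        Dus K Q ∘ₗ (Dbsu m K ∘ₗ (Dus n m ∘ₗ Dbsu P n)))]
    abel
  have hmain : (∑ N ∈ Finset.Icc P Q, ∑ M ∈ Finset.Icc N Q,
        Dos M Q ∘ₗ (Duo N M ∘ₗ Dbsu P N))
      + (∑ N ∈ Finset.Icc P Q, ∑ M ∈ Finset.Icc N Q,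
        Dbss M Q ∘ₗ (Dus N M ∘ₗ Dbsu P N))
      + (∑ N ∈ Finset.Icc P Q, ∑ M ∈ Finset.Icc N Q, ∑ K ∈ Finset.Icc M Q,
        Dus K Q ∘ₗ (Dbsu M K ∘ₗ (Dus N M ∘ₗ Dbsu P N)))
      = (∑ N ∈ Finset.Icc P Q, Dbus N Q ∘ₗ Dbsu P N)
        + ∑ N ∈ Finset.Icc P Q, ∑ M ∈ Finset.Icc N Q,
            Dus M Q ∘ₗ (Dbuu N M ∘ₗ Dbsu P N) := by
    rw [← Finset.sum_add_distrib, ← Finset.sum_add_distrib, ← Finset.sum_add_distrib]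
    refine Finset.sum_congr rfl (fun N hN => ?_)
    have hNQ : N ≤ Q := (Finset.mem_Icc.mp hN).2
    have h := hAus N Q hNQ
    have h0 : (Dbus N Q
        + (∑ K ∈ Finset.Icc N Q,
            (Dos K Q ∘ₗ Duo N K + Dbss K Q ∘ₗ Dus N K + Dus K Q ∘ₗ Dbuu N K))
        + ∑ K ∈ Finset.Icc N Q, ∑ M ∈ Finset.Icc K Q,
            Dus M Q ∘ₗ Dbsu K M ∘ₗ Dus N K) ∘ₗ Dbsu P N = 0 := by
      rw [h, LinearMap.zero_comp]
    apply char2_eq_of_add_eq_zero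
    rw [← h0]
    simp only [LinearMap.add_comp, sum_comp', LinearMap.comp_assoc, Finset.sum_add_distrib]
    abel
  have hWS2 : (∑ M ∈ Finset.Icc P Q, Dbss M Q ∘ₗ Dbss P M)
      + (∑ N ∈ Finset.Icc P Q, Dbus N Q ∘ₗ Dbsu P N) = 0 := by
    have h := hAbss P Q hPQ
    rw [Finset.sum_add_distrib] at h
    exact h
  have hV4 : (∑ M ∈ Finset.Icc P Q, ∑ K ∈ Finset.Icc M Q,
        Dus K Q ∘ₗ (Dbsu M K ∘ₗ Dbss P M))
      + (∑ N ∈ Finset.Icc P Q, ∑ M ∈ Finset.Icc N Q,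
        Dus M Q ∘ₗ (Dbuu N M ∘ₗ Dbsu P N)) = 0 := by
    rw [← sum_Icc_swap P Q (fun m n => Dus m Q ∘ₗ (Dbsu n m ∘ₗ Dbss P n)),
      ← sum_Icc_swap P Q (fun m n => Dus m Q ∘ₗ (Dbuu n m ∘ₗ Dbsu P n)),
      ← Finset.sum_add_distrib]
    refine Finset.sum_eq_zero (fun M hM => ?_)
    have hPM : P ≤ M := (Finset.mem_Icc.mp hM).1
    have h := hAbsu P M hPM
    rw [← Finset.sum_add_distrib]
    calc ∑ n ∈ Finset.Icc P M,
          (Dus M Q ∘ₗ (Dbsu n M ∘ₗ Dbss P n) + Dus M Q ∘ₗ (Dbuu n M ∘ₗ Dbsu P n))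
        = Dus M Q ∘ₗ ∑ n ∈ Finset.Icc P M,
            (Dbsu n M ∘ₗ Dbss P n + Dbuu n M ∘ₗ Dbsu P n) := by
          rw [comp_sum']
          exact Finset.sum_congr rfl (fun _ _ => (LinearMap.comp_add _ _ _).symm)
      _ = 0 := by rw [h, LinearMap.comp_zero]
  rw [hp1, hp2]
  have hzero : ((∑ N ∈ Finset.Icc P Q, ∑ M ∈ Finset.Icc N Q,
          Dos M Q ∘ₗ (Duo N M ∘ₗ Dbsu P N))
        + (∑ N ∈ Finset.Icc P Q, ∑ M ∈ Finset.Icc N Q,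
            Dbss M Q ∘ₗ (Dus N M ∘ₗ Dbsu P N))
        + (∑ N ∈ Finset.Icc P Q, ∑ M ∈ Finset.Icc N Q, ∑ K ∈ Finset.Icc M Q,
            Dus K Q ∘ₗ (Dbsu M K ∘ₗ (Dus N M ∘ₗ Dbsu P N))))
      + ((∑ M ∈ Finset.Icc P Q, Dbss M Q ∘ₗ Dbss P M)
        + (∑ M ∈ Finset.Icc P Q, ∑ K ∈ Finset.Icc M Q,
            Dus K Q ∘ₗ (Dbsu M K ∘ₗ Dbss P M))) = 0 := by
    rw [hmain]
    have h2 : ((∑ M ∈ Finset.Icc P Q, Dbss M Q ∘ₗ Dbss P M)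
          + (∑ N ∈ Finset.Icc P Q, Dbus N Q ∘ₗ Dbsu P N))
        + ((∑ M ∈ Finset.Icc P Q, ∑ K ∈ Finset.Icc M Q,
            Dus K Q ∘ₗ (Dbsu M K ∘ₗ Dbss P M))
          + (∑ N ∈ Finset.Icc P Q, ∑ M ∈ Finset.Icc N Q,
            Dus M Q ∘ₗ (Dbuu N M ∘ₗ Dbsu P N))) = 0 := by
      rw [hWS2, hV4, add_zero]
    rw [← h2]
    abel
  rw [← hzero]
  abel

lemma keylemma
    (hAoo : ∀ P Q : Fin l → Fin 2, P ≤ Q →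
      (∑ K ∈ Finset.Icc P Q, Doo K Q ∘ₗ Doo P K)
        + (∑ K ∈ Finset.Icc P Q, ∑ M ∈ Finset.Icc K Q,
            Duo M Q ∘ₗ Dbsu K M ∘ₗ Dos P K) = 0)
    (hAos : ∀ P Q : Fin l → Fin 2, P ≤ Q →
      (∑ K ∈ Finset.Icc P Q, (Dos K Q ∘ₗ Doo P K + Dbss K Q ∘ₗ Dos P K))
        + (∑ K ∈ Finset.Icc P Q, ∑ M ∈ Finset.Icc K Q,
            Dus M Q ∘ₗ Dbsu K M ∘ₗ Dos P K) = 0)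
    (hAuo : ∀ P Q : Fin l → Fin 2, P ≤ Q →
      (∑ K ∈ Finset.Icc P Q, (Doo K Q ∘ₗ Duo P K + Duo K Q ∘ₗ Dbuu P K))
        + (∑ K ∈ Finset.Icc P Q, ∑ M ∈ Finset.Icc K Q,
            Duo M Q ∘ₗ Dbsu K M ∘ₗ Dus P K) = 0)
    (hAus : ∀ P Q : Fin l → Fin 2, P ≤ Q →
      Dbus P Q
        + (∑ K ∈ Finset.Icc P Q,
            (Dos K Q ∘ₗ Duo P K + Dbss K Q ∘ₗ Dus P K + Dus K Q ∘ₗ Dbuu P K))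
        + (∑ K ∈ Finset.Icc P Q, ∑ M ∈ Finset.Icc K Q,
            Dus M Q ∘ₗ Dbsu K M ∘ₗ Dus P K) = 0)
    (hAbss : ∀ P Q : Fin l → Fin 2, P ≤ Q →
      (∑ K ∈ Finset.Icc P Q, (Dbss K Q ∘ₗ Dbss P K + Dbus K Q ∘ₗ Dbsu P K)) = 0)
    (hAbsu : ∀ P Q : Fin l → Fin 2, P ≤ Q →
      (∑ K ∈ Finset.Icc P Q, (Dbsu K Q ∘ₗ Dbss P K + Dbuu K Q ∘ₗ Dbsu P K)) = 0)
    (P Q : Fin l → Fin 2) (hPQ : P ≤ Q) :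
    ∑ M ∈ Finset.Icc P Q, 𝒟 M Q ∘ₗ 𝒟 P M = 0 := by
  calc ∑ M ∈ Finset.Icc P Q, 𝒟 M Q ∘ₗ 𝒟 P M
      = ∑ M ∈ Finset.Icc P Q, LinearMap.prod
          ((Doo M Q ∘ₗ Doo P M + B₀ M Q ∘ₗ Dos P M) ∘ₗ
              LinearMap.fst (ZMod 2) (Co P) (Cs P)
            + (Doo M Q ∘ₗ B₀ P M + B₀ M Q ∘ₗ Dσ P M) ∘ₗ
              LinearMap.snd (ZMod 2) (Co P) (Cs P))
          ((Dos M Q ∘ₗ Doo P M + Dσ M Q ∘ₗ Dos P M) ∘ₗ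
              LinearMap.fst (ZMod 2) (Co P) (Cs P)
            + (Dos M Q ∘ₗ B₀ P M + Dσ M Q ∘ₗ Dσ P M) ∘ₗ
              LinearMap.snd (ZMod 2) (Co P) (Cs P)) :=
        Finset.sum_congr rfl (fun M _ =>
          comp_eq Co Cs Cu Doo Dos Duo Dus Dbss Dbsu P M Q)
    _ = LinearMap.prod
          ((∑ M ∈ Finset.Icc P Q, (Doo M Q ∘ₗ Doo P M + B₀ M Q ∘ₗ Dos P M)) ∘ₗ
              LinearMap.fst (ZMod 2) (Co P) (Cs P)
            + (∑ M ∈ Finset.Icc P Q, (Doo M Q ∘ₗ B₀ P M + B₀ M Q ∘ₗ Dσ P M)) ∘ₗ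
              LinearMap.snd (ZMod 2) (Co P) (Cs P))
          ((∑ M ∈ Finset.Icc P Q, (Dos M Q ∘ₗ Doo P M + Dσ M Q ∘ₗ Dos P M)) ∘ₗ
              LinearMap.fst (ZMod 2) (Co P) (Cs P)
            + (∑ M ∈ Finset.Icc P Q, (Dos M Q ∘ₗ B₀ P M + Dσ M Q ∘ₗ Dσ P M)) ∘ₗ
              LinearMap.snd (ZMod 2) (Co P) (Cs P)) := by
        rw [sum_prod_eq, Finset.sum_add_distrib, Finset.sum_add_distrib,
          ← sum_comp', ← sum_comp', ← sum_comp', ← sum_comp']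
    _ = 0 := by
        rw [comp_oo (Co := Co) (Cs := Cs) (Cu := Cu) (Doo := Doo) (Dos := Dos)
            (Duo := Duo) (Dbsu := Dbsu) hAoo P Q hPQ,
          comp_os (Co := Co) (Cs := Cs) (Cu := Cu) (Doo := Doo) (Duo := Duo)
            (Dus := Dus) (Dbss := Dbss) (Dbsu := Dbsu) (Dbuu := Dbuu) hAuo hAbsu P Q hPQ,
          comp_so (Co := Co) (Cs := Cs) (Cu := Cu) (Doo := Doo) (Dos := Dos)
            (Dus := Dus) (Dbss := Dbss) (Dbsu := Dbsu) hAos P Q hPQ,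
          comp_ss (Co := Co) (Cs := Cs) (Cu := Cu) (Dos := Dos) (Duo := Duo)
            (Dus := Dus) (Dbss := Dbss) (Dbsu := Dbsu) (Dbus := Dbus) (Dbuu := Dbuu)
            hAus hAbss hAbsu P Q hPQ]
        ext x <;> simp

end aux

/-- **Proposition: `(X, D-check, F)` is a filtered chain complex.**
If all the boundary-counting components `A^o_o, A^o_s, A^u_o, A^u_s, Abar^s_s, Abar^s_u`
vanish for every pair `I ≤ J` of vertices of the hypercube `{0,1}^l`, then the total
map `D-check` on `X = ⊕_I (Co I ⊕ Cs I)` (whose `(I,J)`-component is `D-check(I,J)` for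
`I ≤ J` and zero otherwise) squares to zero and preserves the decreasing weight
filtration `F^i X = ⊕_{w(I) ≥ i} (Co I ⊕ Cs I)`. -/
theorem DCheck_filtered_chain_complex {l : ℕ}
    (Co Cs Cu : (Fin l → Fin 2) → Type*)
    [∀ I, AddCommGroup (Co I)] [∀ I, AddCommGroup (Cs I)] [∀ I, AddCommGroup (Cu I)]
    [∀ I, Module (ZMod 2) (Co I)] [∀ I, Module (ZMod 2) (Cs I)]
    [∀ I, Module (ZMod 2) (Cu I)]
    (Doo : ∀ I J : Fin l → Fin 2, Co I →ₗ[ZMod 2] Co J)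
    (Dos : ∀ I J : Fin l → Fin 2, Co I →ₗ[ZMod 2] Cs J)
    (Duo : ∀ I J : Fin l → Fin 2, Cu I →ₗ[ZMod 2] Co J)
    (Dus : ∀ I J : Fin l → Fin 2, Cu I →ₗ[ZMod 2] Cs J)
    (Dbss : ∀ I J : Fin l → Fin 2, Cs I →ₗ[ZMod 2] Cs J)
    (Dbsu : ∀ I J : Fin l → Fin 2, Cs I →ₗ[ZMod 2] Cu J)
    (Dbus : ∀ I J : Fin l → Fin 2, Cu I →ₗ[ZMod 2] Cs J)
    (Dbuu : ∀ I J : Fin l → Fin 2, Cu I →ₗ[ZMod 2] Cu J)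
    (hAoo : ∀ P Q : Fin l → Fin 2, P ≤ Q →
      (∑ K ∈ Finset.Icc P Q, Doo K Q ∘ₗ Doo P K)
        + (∑ K ∈ Finset.Icc P Q, ∑ M ∈ Finset.Icc K Q,
            Duo M Q ∘ₗ Dbsu K M ∘ₗ Dos P K) = 0)
    (hAos : ∀ P Q : Fin l → Fin 2, P ≤ Q →
      (∑ K ∈ Finset.Icc P Q, (Dos K Q ∘ₗ Doo P K + Dbss K Q ∘ₗ Dos P K))
        + (∑ K ∈ Finset.Icc P Q, ∑ M ∈ Finset.Icc K Q,
            Dus M Q ∘ₗ Dbsu K M ∘ₗ Dos P K) = 0)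
    (hAuo : ∀ P Q : Fin l → Fin 2, P ≤ Q →
      (∑ K ∈ Finset.Icc P Q, (Doo K Q ∘ₗ Duo P K + Duo K Q ∘ₗ Dbuu P K))
        + (∑ K ∈ Finset.Icc P Q, ∑ M ∈ Finset.Icc K Q,
            Duo M Q ∘ₗ Dbsu K M ∘ₗ Dus P K) = 0)
    (hAus : ∀ P Q : Fin l → Fin 2, P ≤ Q →
      Dbus P Q
        + (∑ K ∈ Finset.Icc P Q,
            (Dos K Q ∘ₗ Duo P K + Dbss K Q ∘ₗ Dus P K + Dus K Q ∘ₗ Dbuu P K))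
        + (∑ K ∈ Finset.Icc P Q, ∑ M ∈ Finset.Icc K Q,
            Dus M Q ∘ₗ Dbsu K M ∘ₗ Dus P K) = 0)
    (hAbss : ∀ P Q : Fin l → Fin 2, P ≤ Q →
      (∑ K ∈ Finset.Icc P Q, (Dbss K Q ∘ₗ Dbss P K + Dbus K Q ∘ₗ Dbsu P K)) = 0)
    (hAbsu : ∀ P Q : Fin l → Fin 2, P ≤ Q →
      (∑ K ∈ Finset.Icc P Q, (Dbsu K Q ∘ₗ Dbss P K + Dbuu K Q ∘ₗ Dbsu P K)) = 0) :
    let w : (Fin l → Fin 2) → ℕ := fun P => (Finset.univ.filter fun k => P k = 1).card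
    let DCheck : ∀ P Q : Fin l → Fin 2, (Co P × Cs P) →ₗ[ZMod 2] (Co Q × Cs Q) :=
      fun P Q =>
        LinearMap.prod
          (Doo P Q ∘ₗ LinearMap.fst (ZMod 2) (Co P) (Cs P)
            + (∑ K ∈ Finset.Icc P Q, Duo K Q ∘ₗ Dbsu P K) ∘ₗ
                LinearMap.snd (ZMod 2) (Co P) (Cs P))
          (Dos P Q ∘ₗ LinearMap.fst (ZMod 2) (Co P) (Cs P)
            + (Dbss P Q + ∑ K ∈ Finset.Icc P Q, Dus K Q ∘ₗ Dbsu P K) ∘ₗ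
                LinearMap.snd (ZMod 2) (Co P) (Cs P))
    -- the total map on `X = ⊕_I (Co I ⊕ Cs I)`, with `(P,Q)`-component
    -- `DCheck P Q` when `P ≤ Q` and zero otherwise:
    let DT : (∀ P, Co P × Cs P) →ₗ[ZMod 2] (∀ P, Co P × Cs P) :=
      LinearMap.pi fun Q => ∑ P ∈ Finset.Iic Q, DCheck P Q ∘ₗ LinearMap.proj P
    -- `D-check` squares to zero and respects the weight filtration:
    DT ∘ₗ DT = 0 ∧
      ∀ (i : ℕ) (x : ∀ P, Co P × Cs P),
        (∀ P, w P < i → x P = 0) → ∀ Q, w Q < i → DT x Q = 0 := by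
  intro w DCheck DT
  have hDT : ∀ (y : ∀ P, Co P × Cs P) (Q : Fin l → Fin 2),
      DT y Q = ∑ P ∈ Finset.Iic Q,
        DC Co Cs Cu Doo Dos Duo Dus Dbss Dbsu P Q (y P) := by
    intro y Q
    show (∑ P ∈ Finset.Iic Q,
        DC Co Cs Cu Doo Dos Duo Dus Dbss Dbsu P Q ∘ₗ LinearMap.proj P) y = _
    simp
  constructor
  · apply LinearMap.ext
    intro x
    funext Q
    show DT (DT x) Q = 0
    calc DT (DT x) Q
        = ∑ M ∈ Finset.Iic Q,
            DC Co Cs Cu Doo Dos Duo Dus Dbss Dbsu M Q (DT x M) := hDT _ Q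
      _ = ∑ M ∈ Finset.Iic Q, ∑ P ∈ Finset.Iic M,
            DC Co Cs Cu Doo Dos Duo Dus Dbss Dbsu M Q
              (DC Co Cs Cu Doo Dos Duo Dus Dbss Dbsu P M (x P)) := by
          refine Finset.sum_congr rfl (fun M _ => ?_)
          rw [hDT, map_sum]
      _ = ∑ P ∈ Finset.Iic Q, ∑ M ∈ Finset.Icc P Q,
            DC Co Cs Cu Doo Dos Duo Dus Dbss Dbsu M Q
              (DC Co Cs Cu Doo Dos Duo Dus Dbss Dbsu P M (x P)) :=
          sum_Iic_swap Q (fun m p =>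
            DC Co Cs Cu Doo Dos Duo Dus Dbss Dbsu m Q
              (DC Co Cs Cu Doo Dos Duo Dus Dbss Dbsu p m (x p)))
      _ = ∑ P ∈ Finset.Iic Q,
            (∑ M ∈ Finset.Icc P Q,
              DC Co Cs Cu Doo Dos Duo Dus Dbss Dbsu M Q ∘ₗ
                DC Co Cs Cu Doo Dos Duo Dus Dbss Dbsu P M) (x P) := by
          refine Finset.sum_congr rfl (fun P _ => ?_)
          simp
      _ = 0 := by
          refine Finset.sum_eq_zero (fun P hP => ?_)
          rw [keylemma Co Cs Cu Doo Dos Duo Dus Dbss Dbsu Dbus Dbuu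
            hAoo hAos hAuo hAus hAbss hAbsu P Q (Finset.mem_Iic.mp hP)]
          rfl
  · intro i x hx Q hQ
    rw [hDT]
    refine Finset.sum_eq_zero (fun P hP => ?_)
    have hPQ : P ≤ Q := Finset.mem_Iic.mp hP
    have hwP : w P ≤ w Q := by
      show (Finset.univ.filter fun k => P k = 1).card
          ≤ (Finset.univ.filter fun k => Q k = 1).card
      apply Finset.card_le_card
      intro k hk
      rw [Finset.mem_filter] at hk ⊢
      refine ⟨hk.1, ?_⟩
      have h1 := hPQ k
      rw [hk.2] at h1
      exact (by decide : ∀ a : Fin 2, (1:Fin 2) ≤ a → a = 1) (Q k) h1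
    rw [hx P (lt_of_le_of_lt hwP hQ), map_zero]
end

section
/- Work over the two-element field F_2. Suppose given F_2-vector spaces C_I for each I in the hypercube {0,1}^l; for every pair I ≤ J and every path γ ∈ Γ(I,J) a linear map d_γ : C_I → C_J; and for every I ≤ K_1 < K_2 ≤ J with w(K_2) − w(K_1) ≥ 2 and every pair (γ_1, γ_2) ∈ Γ(I,K_1) × Γ(K_2,J) a linear map S(γ_1, γ_2) : C_I → C_J. Assume that for every path γ = (I_0 < I_1 < ⋯ < I_n) the A-infinity relation Σ_{k=0}^{n} d_{γ[k,n]} ∘ d_{γ[0,k]} = Σ_{0 ≤ j, j+1 < k ≤ n} S(γ[0,j], γ[k,n]) holds. Then, setting d-check(I,J) = Σ_{γ ∈ Γ(I,J)} d_γ, one has Σ_{I≤K≤J} d-check(K,J) ∘ d-check(I,K) = 0 for all I ≤ J; equivalently, the map d-check := Σ_{I≤J} d-check(I,J) is a differential on ⊕_I C_I. -/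
/-- A path in the hypercube `{0,1}^l` from `I` to `J`: a sequence of vertices
`v 0 = I, v 1, …, v n = J` in which each vertex is an immediate successor (`⋖`, i.e.
exactly one coordinate changes from `0` to `1`) of the previous one.  The sequence is
extended constantly by `J` beyond step `n` so that the path is determined by its data. -/
structure HPath (l : ℕ) (I J : Fin l → Fin 2) where
  n : ℕ
  v : ℕ → Fin l → Fin 2
  first : v 0 = I
  tail : ∀ m, n ≤ m → v m = J
  step : ∀ k, k < n → v k ⋖ v (k + 1)

/-- The subpath `γ[j,k]` of a hypercube path `γ`, from its `j`-th to its `k`-th vertex. -/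
def HPath.sub {l : ℕ} {I J : Fin l → Fin 2} (γ : HPath l I J) (j k : ℕ)
    (hjk : j ≤ k) (hkn : k ≤ γ.n) : HPath l (γ.v j) (γ.v k) where
  n := k - j
  v := fun m => γ.v (j + min m (k - j))
  first := by
    show γ.v (j + min 0 (k - j)) = γ.v j
    rw [min_eq_left (Nat.zero_le _), Nat.add_zero]
  tail := fun m hm => by
    show γ.v (j + min m (k - j)) = γ.v k
    rw [min_eq_right hm, Nat.add_sub_cancel' hjk]
  step := fun m hm => by
    show γ.v (j + min m (k - j)) ⋖ γ.v (j + min (m + 1) (k - j))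
    rw [min_eq_left (le_of_lt hm), min_eq_left hm]
    exact γ.step (j + m) (by omega)

namespace HPathAux

variable {l : ℕ}


lemma fin2_zero_one {x y : Fin 2} (h : x ≤ y) (hne : x ≠ y) : x = 0 ∧ y = 1 := by
  have hx := x.isLt; have hy := y.isLt
  rw [Fin.le_def] at h
  have hne' : x.val ≠ y.val := fun hh => hne (Fin.ext hh)
  refine ⟨Fin.ext ?_, Fin.ext ?_⟩ <;> simp only [Fin.val_zero, Fin.val_one] <;> omega

lemma update_covBy (a : Fin l → Fin 2) (i : Fin l) (h : a i = 0) :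
    a ⋖ Function.update a i 1 := by
  have hle : a ≤ Function.update a i 1 := by
    intro j
    by_cases hj : j = i
    · subst hj; rw [Function.update_self, h]; exact Fin.zero_le _
    · rw [Function.update_of_ne hj]
  have hne : a ≠ Function.update a i 1 := by
    intro hc
    have := congrFun hc i
    rw [Function.update_self, h] at this
    exact absurd this (by decide)
  refine ⟨lt_of_le_of_ne hle hne, ?_⟩
  intro c hac hcb
  have h1 : ∀ j, j ≠ i → c j = a j := by
    intro j hj
    have h2 := hac.le j
    have h3 := hcb.le j
    rw [Function.update_of_ne hj] at h3
    exact le_antisymm h3 h2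
  rcases eq_or_ne (c i) (a i) with h4 | h4
  · apply hac.ne'
    funext j
    by_cases hj : j = i
    · subst hj; exact h4
    · exact h1 j hj
  · have h5 : c i = 1 := by
      have h7 := hcb.le i
      rw [Function.update_self] at h7
      have hx := (c i).isLt
      have h6 : a i ≤ c i := hac.le i
      rw [Fin.le_def] at h7
      have : (c i).val = 1 := by
        have h8 : (c i).val ≠ (a i).val := fun hh => h4 (Fin.ext hh)
        have : (a i).val = 0 := by rw [h]; rfl
        simp only [Fin.val_one] at h7 ⊢
        omega
      exact Fin.ext (by simpa using this)
    apply hcb.ne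
    funext j
    by_cases hj : j = i
    · subst hj; rw [Function.update_self, h5]
    · rw [Function.update_of_ne hj, h1 j hj]

lemma covBy_exists {a b : Fin l → Fin 2} (h : a ⋖ b) :
    ∃ i, a i = 0 ∧ b = Function.update a i 1 := by
  obtain ⟨hle, i, hi⟩ := Pi.lt_def.mp h.lt
  obtain ⟨hai, hbi⟩ := fin2_zero_one hi.le hi.ne
  refine ⟨i, hai, ?_⟩
  by_contra hne
  have hne' : ∃ j, b j ≠ Function.update a i 1 j := Function.ne_iff.mp hne
  obtain ⟨j, hj⟩ := hne'
  have hji : j ≠ i := by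
    intro hh; subst hh; rw [Function.update_self, hbi] at hj; exact hj rfl
  rw [Function.update_of_ne hji] at hj
  obtain ⟨haj, hbj⟩ := fin2_zero_one (hle j) (Ne.symm hj)
  have hcb : Function.update a i 1 < b := by
    have hle2 : Function.update a i 1 ≤ b := by
      intro k
      by_cases hk : k = i
      · subst hk; rw [Function.update_self, hbi]
      · rw [Function.update_of_ne hk]; exact hle k
    refine lt_of_le_of_ne hle2 ?_
    intro hc
    have := congrFun hc j
    rw [Function.update_of_ne hji, haj, hbj] at this
    exact absurd this (by decide)
  exact h.2 (update_covBy a i hai).lt hcb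


def wt (a : Fin l → Fin 2) : ℕ := ∑ i, (a i).val

lemma wt_le (a : Fin l → Fin 2) : wt a ≤ l := by
  have : wt a ≤ ∑ _i : Fin l, 1 :=
    Finset.sum_le_sum (fun i _ => Nat.lt_succ_iff.mp (a i).isLt)
  simpa using this

lemma wt_lt_of_lt {a b : Fin l → Fin 2} (h : a < b) : wt a < wt b := by
  obtain ⟨hle, i, hi⟩ := Pi.lt_def.mp h
  exact Finset.sum_lt_sum (fun j _ => hle j) ⟨i, Finset.mem_univ i, hi⟩

end HPathAux

namespace HPath

open HPathAux

variable {l : ℕ} {I J K : Fin l → Fin 2}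

lemma ext' {γ δ : HPath l I J} (hn : γ.n = δ.n) (hv : γ.v = δ.v) : γ = δ := by
  cases γ; cases δ
  cases hn; cases hv
  rfl

lemma v_le_v (γ : HPath l I J) : ∀ k, k ≤ γ.n → ∀ j, j ≤ k → γ.v j ≤ γ.v k := by
  intro k
  induction k with
  | zero => intro _ j hj; cases Nat.le_zero.mp hj; exact le_rfl
  | succ k ih =>
    intro hk j hj
    rcases Nat.lt_succ_iff_lt_or_eq.mp (Nat.lt_succ_of_le hj) with h' | h'
    · exact le_trans (ih (by omega) j (by omega)) (γ.step k (by omega)).le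
    · cases h'; exact le_rfl

lemma endpoints_le (γ : HPath l I J) : I ≤ J := by
  have h := γ.v_le_v γ.n le_rfl 0 (Nat.zero_le _)
  rw [γ.first, γ.tail γ.n le_rfl] at h
  exact h

lemma wt_add_le (γ : HPath l I J) : ∀ k, k ≤ γ.n → k ≤ wt (γ.v k) := by
  intro k
  induction k with
  | zero => omega
  | succ k ih =>
    intro hk
    have h1 := ih (by omega)
    have h2 := wt_lt_of_lt (γ.step k (by omega)).lt
    omega

lemma n_le (γ : HPath l I J) : γ.n ≤ l :=
  le_trans (γ.wt_add_le γ.n le_rfl) (wt_le _)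

noncomputable instance : Fintype (HPath l I J) := by
  refine Fintype.ofInjective
    (fun γ => ((⟨γ.n, Nat.lt_succ_of_le γ.n_le⟩ : Fin (l + 1)),
      fun m : Fin (l + 1) => γ.v m)) ?_
  intro γ δ h
  rw [Prod.mk.injEq] at h
  obtain ⟨h1, h2⟩ := h
  have hn : γ.n = δ.n := by simpa [Fin.mk.injEq] using h1
  refine ext' hn (funext fun m => ?_)
  by_cases hm : m ≤ l
  · exact congrFun h2 ⟨m, by omega⟩
  · rw [γ.tail m (by have := γ.n_le; omega), δ.tail m (by have := δ.n_le; omega)]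

def copy (γ : HPath l I J) {I' J' : Fin l → Fin 2} (hI : I = I') (hJ : J = J') :
    HPath l I' J' where
  n := γ.n
  v := γ.v
  first := hI ▸ γ.first
  tail := fun m hm => hJ ▸ γ.tail m hm
  step := γ.step

def concat (γ₁ : HPath l I K) (γ₂ : HPath l K J) : HPath l I J where
  n := γ₁.n + γ₂.n
  v := fun m => if m < γ₁.n then γ₁.v m else γ₂.v (m - γ₁.n)
  first := by
    by_cases h : 0 < γ₁.n
    · simp only [if_pos h, γ₁.first]
    · have h0 : γ₁.n = 0 := by omega
      simp only [if_neg h]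
      have h2 : (0:ℕ) - γ₁.n = 0 := by omega
      rw [h2, γ₂.first]
      exact (γ₁.tail 0 (by omega)).symm.trans γ₁.first
  tail := fun m hm => by
    have h1 : ¬ m < γ₁.n := by omega
    simp only [if_neg h1]
    exact γ₂.tail (m - γ₁.n) (by omega)
  step := fun k hk => by
    by_cases h1 : k + 1 < γ₁.n
    · simp only [if_pos h1, if_pos (by omega : k < γ₁.n)]
      exact γ₁.step k (by omega)
    · by_cases h2 : k < γ₁.n
      · have hk1 : k + 1 = γ₁.n := by omega
        simp only [if_pos h2, if_neg h1]
        have : γ₂.v (k + 1 - γ₁.n) = γ₁.v (k + 1) := by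
          rw [hk1, Nat.sub_self, γ₂.first, γ₁.tail γ₁.n le_rfl]
        rw [this]
        exact γ₁.step k h2
      · simp only [if_neg h1, if_neg h2]
        have : k + 1 - γ₁.n = (k - γ₁.n) + 1 := by omega
        rw [this]
        exact γ₂.step (k - γ₁.n) (by omega)

end HPath

namespace HPathAux

variable {l : ℕ}

/-- The other midpoint between `a` and `c` when `a ⋖ b ⋖ c`. -/
def mid (a b c : Fin l → Fin 2) : Fin l → Fin 2 := fun i => if a i = b i then c i else a i

section Mid

variable {a b c : Fin l → Fin 2} (hab : a ⋖ b) (hbc : b ⋖ c)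

include hab hbc

lemma mid_spec :
    ∃ i₁ i₂ : Fin l, i₁ ≠ i₂ ∧ a i₁ = 0 ∧ b = Function.update a i₁ 1 ∧
      b i₂ = 0 ∧ c = Function.update b i₂ 1 ∧
      mid a b c = Function.update a i₂ 1 := by
  obtain ⟨i₁, ha1, hb⟩ := covBy_exists hab
  obtain ⟨i₂, hb2, hc⟩ := covBy_exists hbc
  have hne : i₁ ≠ i₂ := by
    intro h
    rw [hb, ← h, Function.update_self] at hb2
    exact absurd hb2 (by decide)
  refine ⟨i₁, i₂, hne, ha1, hb, hb2, hc, ?_⟩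
  funext i
  show (if a i = b i then c i else a i) = _
  by_cases h2 : i = i₂
  · rw [h2]
    have hab2 : a i₂ = b i₂ := by rw [hb, Function.update_of_ne (Ne.symm hne)]
    rw [if_pos hab2, hc, Function.update_self, Function.update_self]
  · rw [Function.update_of_ne h2]
    by_cases h1 : i = i₁
    · rw [h1]
      have hne1 : a i₁ ≠ b i₁ := by
        rw [hb, Function.update_self, ha1]; decide
      rw [if_neg hne1]
    · have hai : a i = b i := by rw [hb, Function.update_of_ne h1]
      rw [if_pos hai, hc, Function.update_of_ne h2, ← hai]

lemma mid_covBy_left : a ⋖ mid a b c := by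
  obtain ⟨i₁, i₂, hne, ha1, hb, hb2, hc, hm⟩ := mid_spec hab hbc
  rw [hm]
  refine update_covBy a i₂ ?_
  rw [← hb2, hb, Function.update_of_ne (Ne.symm hne)]

lemma mid_covBy_right : mid a b c ⋖ c := by
  obtain ⟨i₁, i₂, hne, ha1, hb, hb2, hc, hm⟩ := mid_spec hab hbc
  have hc1 : c i₁ = 1 := by
    rw [hc, Function.update_of_ne hne, hb, Function.update_self]
  have hmc : mid a b c = Function.update c i₁ 0 := by
    rw [hm]
    funext i
    by_cases h1 : i = i₁
    · rw [h1, Function.update_of_ne hne, Function.update_self, ha1]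
    · rw [Function.update_of_ne h1]
      by_cases h2 : i = i₂
      · rw [h2, Function.update_self, hc, Function.update_self]
      · rw [Function.update_of_ne h2, hc, Function.update_of_ne h2, hb,
          Function.update_of_ne h1]
  have hkey : Function.update c i₁ 0 ⋖ Function.update (Function.update c i₁ 0) i₁ 1 :=
    update_covBy _ i₁ (Function.update_self _ _ _)
  rw [Function.update_idem] at hkey
  have hcc : Function.update c i₁ 1 = c := by
    rw [← hc1, Function.update_eq_self]
  rw [hcc] at hkey
  rw [hmc]
  exact hkey

lemma mid_ne : mid a b c ≠ b := by
  obtain ⟨i₁, i₂, hne, ha1, hb, hb2, hc, hm⟩ := mid_spec hab hbc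
  intro h
  have h2 := congrFun h i₂
  rw [hm, Function.update_self, hb2] at h2
  exact absurd h2 (by decide)

lemma mid_mid : mid a (mid a b c) c = b := by
  obtain ⟨i₁, i₂, hne, ha1, hb, hb2, hc, hm⟩ := mid_spec hab hbc
  funext i
  show (if a i = mid a b c i then c i else a i) = b i
  by_cases h1 : i = i₁
  · rw [h1]
    have h2 : a i₁ = mid a b c i₁ := by
      rw [hm, Function.update_of_ne hne]
    rw [if_pos h2, hc, Function.update_of_ne hne]
  · by_cases h2 : i = i₂
    · rw [h2]
      have haii : a i₂ = b i₂ := by rw [hb, Function.update_of_ne (Ne.symm hne)]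
      have h3 : a i₂ ≠ mid a b c i₂ := by
        rw [hm, Function.update_self, haii, hb2]; decide
      rw [if_neg h3]
      exact haii
    · have h3 : a i = mid a b c i := by
        rw [hm, Function.update_of_ne h2]
      rw [if_pos h3, hc, Function.update_of_ne h2]

end Mid

end HPathAux

namespace HPath

open HPathAux

variable {l : ℕ} {I J : Fin l → Fin 2}

def swapAt (γ : HPath l I J) (m : ℕ) (h : m + 2 ≤ γ.n) : HPath l I J where
  n := γ.n
  v := Function.update γ.v (m+1) (mid (γ.v m) (γ.v (m+1)) (γ.v (m+2)))
  first := by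
    rw [Function.update_of_ne (by omega : (0:ℕ) ≠ m+1)]
    exact γ.first
  tail := fun k hk => by
    rw [Function.update_of_ne (by omega : k ≠ m+1)]
    exact γ.tail k hk
  step := fun k hk => by
    have s1 : γ.v m ⋖ γ.v (m+1) := γ.step m (by omega)
    have s2 : γ.v (m+1) ⋖ γ.v (m+2) := γ.step (m+1) (by omega)
    rcases eq_or_ne k m with rfl | h1
    · rw [Function.update_of_ne (by omega : k ≠ k+1), Function.update_self]
      exact mid_covBy_left s1 s2
    · rcases eq_or_ne k (m+1) with rfl | h2
      · rw [Function.update_self, Function.update_of_ne (by omega : m+1+1 ≠ m+1)]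
        exact mid_covBy_right s1 s2
      · rw [Function.update_of_ne h2, Function.update_of_ne (by omega : k+1 ≠ m+1)]
        exact γ.step k hk

lemma swapAt_n (γ : HPath l I J) (m : ℕ) (h : m + 2 ≤ γ.n) : (γ.swapAt m h).n = γ.n := rfl

lemma swapAt_v_ne (γ : HPath l I J) (m : ℕ) (h : m + 2 ≤ γ.n) {k : ℕ} (hk : k ≠ m + 1) :
    (γ.swapAt m h).v k = γ.v k := Function.update_of_ne hk _ _

lemma swapAt_v_mid (γ : HPath l I J) (m : ℕ) (h : m + 2 ≤ γ.n) :
    (γ.swapAt m h).v (m+1) = mid (γ.v m) (γ.v (m+1)) (γ.v (m+2)) :=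
  Function.update_self _ _ _

lemma swapAt_swapAt (γ : HPath l I J) (m : ℕ) (h : m + 2 ≤ γ.n) :
    (γ.swapAt m h).swapAt m h = γ := by
  have s1 : γ.v m ⋖ γ.v (m+1) := γ.step m (by omega)
  have s2 : γ.v (m+1) ⋖ γ.v (m+2) := γ.step (m+1) (by omega)
  refine ext' rfl ?_
  have hmidval : mid ((γ.swapAt m h).v m) ((γ.swapAt m h).v (m+1)) ((γ.swapAt m h).v (m+2))
      = γ.v (m+1) := by
    rw [swapAt_v_ne γ m h (show m ≠ m+1 by omega),
      swapAt_v_ne γ m h (show m+2 ≠ m+1 by omega), swapAt_v_mid γ m h]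
    exact mid_mid s1 s2
  show Function.update ((γ.swapAt m h).v) (m+1) _ = γ.v
  rw [hmidval]
  show Function.update (Function.update γ.v (m+1) _) (m+1) (γ.v (m+1)) = γ.v
  rw [Function.update_idem, Function.update_eq_self]

lemma swapAt_ne (γ : HPath l I J) (m : ℕ) (h : m + 2 ≤ γ.n) : γ.swapAt m h ≠ γ := by
  have s1 : γ.v m ⋖ γ.v (m+1) := γ.step m (by omega)
  have s2 : γ.v (m+1) ⋖ γ.v (m+2) := γ.step (m+1) (by omega)
  intro e
  have h2 := congrFun (congrArg HPath.v e) (m+1)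
  rw [swapAt_v_mid γ m h] at h2
  exact mid_ne s1 s2 h2

end HPath

namespace HPathAux

variable {l : ℕ} {I J : Fin l → Fin 2}

lemma sigma_fin_eq {γ' γ : HPath l I J} (h : γ' = γ) {a : Fin (γ'.n+1)} {b : Fin (γ.n+1)}
    (hab : (a : ℕ) = b) :
    (⟨γ', a⟩ : Σ δ : HPath l I J, Fin (δ.n+1)) = ⟨γ, b⟩ := by
  subst h
  have : a = b := Fin.ext hab
  subst this
  rfl

lemma sigma_fin2_eq {γ' γ : HPath l I J} (h : γ' = γ)
    {a : Fin (γ'.n+1) × Fin (γ'.n+1)} {b : Fin (γ.n+1) × Fin (γ.n+1)}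
    (h1 : (a.1 : ℕ) = b.1) (h2 : (a.2 : ℕ) = b.2) :
    (⟨γ', a⟩ : Σ δ : HPath l I J, Fin (δ.n+1) × Fin (δ.n+1)) = ⟨γ, b⟩ := by
  subst h
  have : a = b := Prod.ext (Fin.ext h1) (Fin.ext h2)
  subst this
  rfl

lemma sigma_pair_eq {K K' : Fin l → Fin 2} (h : K' = K)
    (δ₁ : HPath l I K') (δ₂ : HPath l K' J) (γ₁ : HPath l I K) (γ₂ : HPath l K J)
    (h1n : δ₁.n = γ₁.n) (h1v : δ₁.v = γ₁.v) (h2n : δ₂.n = γ₂.n) (h2v : δ₂.v = γ₂.v) :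
    (⟨K', (δ₁, δ₂)⟩ : Σ K : Fin l → Fin 2, HPath l I K × HPath l K J) = ⟨K, (γ₁, γ₂)⟩ := by
  subst h
  rw [HPath.ext' h1n h1v, HPath.ext' h2n h2v]

variable (I J)

def splitEquiv :
    (Σ γ : HPath l I J, Fin (γ.n + 1)) ≃ (Σ K : Fin l → Fin 2, HPath l I K × HPath l K J) where
  toFun x :=
    ⟨x.1.v x.2,
      ((x.1.sub 0 x.2 (Nat.zero_le _) (Nat.lt_succ_iff.mp x.2.isLt)).copy x.1.first rfl,
       (x.1.sub x.2 x.1.n (Nat.lt_succ_iff.mp x.2.isLt) le_rfl).copy rfl (x.1.tail _ le_rfl))⟩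
  invFun y := ⟨y.2.1.concat y.2.2, ⟨y.2.1.n, Nat.lt_succ_of_le (Nat.le_add_right _ _)⟩⟩
  left_inv := by
    rintro ⟨γ, k⟩
    have hk : (k : ℕ) ≤ γ.n := Nat.lt_succ_iff.mp k.isLt
    refine sigma_fin_eq ?_ rfl
    refine HPath.ext' (by show ((k:ℕ) - 0) + (γ.n - (k:ℕ)) = γ.n; omega) ?_
    funext m
    show (if m < (k:ℕ) - 0 then γ.v (0 + min m ((k:ℕ) - 0))
      else γ.v ((k:ℕ) + min (m - ((k:ℕ) - 0)) (γ.n - (k:ℕ)))) = γ.v m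
    by_cases h1 : m < (k:ℕ) - 0
    · rw [if_pos h1]
      exact congrArg γ.v (by omega)
    · rw [if_neg h1]
      by_cases h2 : m ≤ γ.n
      · exact congrArg γ.v (by omega)
      · rw [γ.tail ((k:ℕ) + min (m - ((k:ℕ) - 0)) (γ.n - (k:ℕ))) (by omega),
          γ.tail m (by omega)]
  right_inv := by
    rintro ⟨K, γ₁, γ₂⟩
    have hKeq : (γ₁.concat γ₂).v γ₁.n = K := by
      show (if γ₁.n < γ₁.n then γ₁.v γ₁.n else γ₂.v (γ₁.n - γ₁.n)) = K
      rw [if_neg (lt_irrefl _), Nat.sub_self]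
      exact γ₂.first
    refine sigma_pair_eq hKeq _ _ _ _ ?_ ?_ ?_ ?_
    · show γ₁.n - 0 = γ₁.n; omega
    · funext m
      show (γ₁.concat γ₂).v (0 + min m (γ₁.n - 0)) = γ₁.v m
      have e : 0 + min m (γ₁.n - 0) = min m γ₁.n := by omega
      rw [e]
      show (if min m γ₁.n < γ₁.n then γ₁.v (min m γ₁.n)
        else γ₂.v (min m γ₁.n - γ₁.n)) = γ₁.v m
      by_cases hm : m < γ₁.n
      · rw [min_eq_left hm.le, if_pos hm]
      · rw [min_eq_right (by omega), if_neg (lt_irrefl _), Nat.sub_self, γ₂.first]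
        exact (γ₁.tail m (by omega)).symm
    · show (γ₁.n + γ₂.n) - γ₁.n = γ₂.n; omega
    · funext m
      show (γ₁.concat γ₂).v (γ₁.n + min m ((γ₁.n + γ₂.n) - γ₁.n)) = γ₂.v m
      have e : (γ₁.n + γ₂.n) - γ₁.n = γ₂.n := by omega
      rw [e]
      show (if γ₁.n + min m γ₂.n < γ₁.n then γ₁.v (γ₁.n + min m γ₂.n)
        else γ₂.v (γ₁.n + min m γ₂.n - γ₁.n)) = γ₂.v m
      rw [if_neg (by omega)]
      have e2 : γ₁.n + min m γ₂.n - γ₁.n = min m γ₂.n := by omega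
      rw [e2]
      by_cases hm : m ≤ γ₂.n
      · rw [min_eq_left hm]
      · rw [min_eq_right (by omega), γ₂.tail γ₂.n le_rfl, γ₂.tail m (by omega)]

end HPathAux

namespace HPathAux

lemma add_self_zmod2 {M : Type*} [AddCommGroup M] [Module (ZMod 2) M] (x : M) : x + x = 0 := by
  have h : (1 + 1 : ZMod 2) = 0 := by decide
  rw [← one_smul (ZMod 2) x, ← add_smul, h, zero_smul]

section Conj

variable {l : ℕ} (C : (Fin l → Fin 2) → Type*)
  [∀ I, AddCommGroup (C I)] [∀ I, Module (ZMod 2) (C I)]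

def cmap {A B : Fin l → Fin 2} (h : A = B) : C A →ₗ[ZMod 2] C B := h ▸ LinearMap.id

def conj {A B I J : Fin l → Fin 2} (hA : A = I) (hB : B = J) (f : C A →ₗ[ZMod 2] C B) :
    C I →ₗ[ZMod 2] C J := (cmap C hB) ∘ₗ f ∘ₗ (cmap C hA.symm)

lemma conj_refl {A B : Fin l → Fin 2} (f : C A →ₗ[ZMod 2] C B) :
    conj C rfl rfl f = f := by
  show LinearMap.id ∘ₗ f ∘ₗ LinearMap.id = f
  rw [LinearMap.comp_id, LinearMap.id_comp]

lemma conj_zero {A B I J : Fin l → Fin 2} (hA : A = I) (hB : B = J) :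
    conj C hA hB (0 : C A →ₗ[ZMod 2] C B) = 0 := by
  subst hA; subst hB
  rw [conj_refl]

lemma conj_sum {A B I J : Fin l → Fin 2} (hA : A = I) (hB : B = J) {ι : Type*} (s : Finset ι)
    (f : ι → (C A →ₗ[ZMod 2] C B)) :
    conj C hA hB (∑ i ∈ s, f i) = ∑ i ∈ s, conj C hA hB (f i) := by
  subst hA; subst hB
  simp only [conj_refl]

lemma conj_comp {A M B I J : Fin l → Fin 2} (hA : A = I) (hB : B = J)
    (f : C M →ₗ[ZMod 2] C B) (g : C A →ₗ[ZMod 2] C M) :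
    (conj C (rfl : M = M) hB f) ∘ₗ (conj C hA (rfl : M = M) g) = conj C hA hB (f ∘ₗ g) := by
  subst hA; subst hB
  simp only [conj_refl]

variable {l' : ℕ} -- dummy

lemma d_copy (d : ∀ I J : Fin l → Fin 2, HPath l I J → (C I →ₗ[ZMod 2] C J))
    {A B A' B' : Fin l → Fin 2} (hA : A = A') (hB : B = B') (δ : HPath l A B) :
    d A' B' (δ.copy hA hB) = conj C hA hB (d A B δ) := by
  subst hA; subst hB
  rw [show δ.copy rfl rfl = δ from HPath.ext' rfl rfl, conj_refl]

lemma conj_S_congr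
    (S : ∀ I K₁ K₂ J : Fin l → Fin 2,
      HPath l I K₁ → HPath l K₂ J → (C I →ₗ[ZMod 2] C J))
    {A A' B B' K₁ K₁' K₂ K₂' I J : Fin l → Fin 2}
    (hA : A = I) (hB : B = J) (hA' : A' = I) (hB' : B' = J)
    (hK₁ : K₁ = K₁') (hK₂ : K₂ = K₂')
    (δ₁ : HPath l A K₁) (δ₂ : HPath l K₂ B) (δ₁' : HPath l A' K₁') (δ₂' : HPath l K₂' B')
    (h1n : δ₁.n = δ₁'.n) (h1v : δ₁.v = δ₁'.v) (h2n : δ₂.n = δ₂'.n) (h2v : δ₂.v = δ₂'.v) :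
    conj C hA hB (S A K₁ K₂ B δ₁ δ₂) = conj C hA' hB' (S A' K₁' K₂' B' δ₁' δ₂') := by
  subst hK₁; subst hK₂
  subst hA; subst hB; subst hA'; subst hB'
  have e1 : δ₁ = δ₁' := HPath.ext' h1n h1v
  have e2 : δ₂ = δ₂' := HPath.ext' h2n h2v
  subst e1; subst e2
  rfl

end Conj

end HPathAux

namespace HPathAux

section Sums

variable {M₁ M₂ M₃ : Type*} [AddCommGroup M₁] [AddCommGroup M₂] [AddCommGroup M₃]
  [Module (ZMod 2) M₁] [Module (ZMod 2) M₂] [Module (ZMod 2) M₃]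

lemma sum_comp' {ι : Type*} (s : Finset ι) (f : ι → M₂ →ₗ[ZMod 2] M₃)
    (g : M₁ →ₗ[ZMod 2] M₂) :
    (∑ i ∈ s, f i) ∘ₗ g = ∑ i ∈ s, f i ∘ₗ g := by
  ext x
  simp [LinearMap.sum_apply]

lemma comp_sum' {ι : Type*} (s : Finset ι) (g : M₂ →ₗ[ZMod 2] M₃)
    (f : ι → M₁ →ₗ[ZMod 2] M₂) :
    g ∘ₗ (∑ i ∈ s, f i) = ∑ i ∈ s, g ∘ₗ f i := by
  ext x
  simp [LinearMap.sum_apply, map_sum]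

lemma comp_expand {ι κ : Type*} [Fintype ι] [Fintype κ]
    (f : ι → M₂ →ₗ[ZMod 2] M₃) (g : κ → M₁ →ₗ[ZMod 2] M₂) :
    (∑ i : ι, f i) ∘ₗ (∑ j : κ, g j) = ∑ p : κ × ι, f p.2 ∘ₗ g p.1 := by
  rw [sum_comp']
  rw [Finset.sum_congr rfl (fun i _ => comp_sum' Finset.univ (f i) g)]
  rw [Fintype.sum_prod_type]
  exact Finset.sum_comm

end Sums

section Main

variable {l : ℕ} (C : (Fin l → Fin 2) → Type*)
  [∀ I, AddCommGroup (C I)] [∀ I, Module (ZMod 2) (C I)]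
  (S : ∀ I K₁ K₂ J : Fin l → Fin 2,
      HPath l I K₁ → HPath l K₂ J → (C I →ₗ[ZMod 2] C J))
  (I J : Fin l → Fin 2)

/-- The summand in the reorganized double `S`-sum. -/
def sFun (x : Σ γ : HPath l I J, Fin (γ.n+1) × Fin (γ.n+1)) : C I →ₗ[ZMod 2] C J :=
  if (x.2.1 : ℕ) + 1 < (x.2.2 : ℕ) then
    conj C x.1.first (x.1.tail x.1.n le_rfl)
      (S (x.1.v 0) (x.1.v x.2.1) (x.1.v x.2.2) (x.1.v x.1.n)
        (x.1.sub 0 x.2.1 (Nat.zero_le _) (Nat.lt_succ_iff.mp x.2.1.isLt))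
        (x.1.sub x.2.2 x.1.n (Nat.lt_succ_iff.mp x.2.2.isLt) le_rfl))
  else 0

/-- The involution swapping the two steps after position `j`. -/
def sInv (x : Σ γ : HPath l I J, Fin (γ.n+1) × Fin (γ.n+1)) :
    Σ γ : HPath l I J, Fin (γ.n+1) × Fin (γ.n+1) :=
  if h : (x.2.1 : ℕ) + 1 < (x.2.2 : ℕ) then
    ⟨x.1.swapAt x.2.1 (by have := Nat.lt_succ_iff.mp x.2.2.isLt; omega), x.2⟩
  else x

lemma sFun_sInv (x : Σ γ : HPath l I J, Fin (γ.n+1) × Fin (γ.n+1)) :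
    sFun C S I J (sInv I J x) = sFun C S I J x := by
  rcases x with ⟨γ, j, k⟩
  by_cases h : (j : ℕ) + 1 < (k : ℕ)
  · have hn : (j : ℕ) + 2 ≤ γ.n := by have := Nat.lt_succ_iff.mp k.isLt; omega
    have e1 : sInv I J ⟨γ, (j, k)⟩ = ⟨γ.swapAt j hn, (j, k)⟩ := dif_pos h
    rw [e1]
    simp only [sFun]
    rw [if_pos h, if_pos h]
    exact conj_S_congr C S _ _ _ _
      (HPath.swapAt_v_ne γ j hn (show (j:ℕ) ≠ (j:ℕ)+1 by omega))
      (HPath.swapAt_v_ne γ j hn (show (k:ℕ) ≠ (j:ℕ)+1 by omega))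
      _ _ _ _
      rfl
      (funext fun m => HPath.swapAt_v_ne γ j hn (by omega))
      rfl
      (funext fun m => HPath.swapAt_v_ne γ j hn (by omega))
  · have e1 : sInv I J ⟨γ, (j, k)⟩ = ⟨γ, (j, k)⟩ := dif_neg h
    rw [e1]

lemma sum_sFun_eq_zero :
    ∑ x : (Σ γ : HPath l I J, Fin (γ.n+1) × Fin (γ.n+1)), sFun C S I J x = 0 := by
  apply Finset.sum_ninvolution (sInv I J)
  · intro a
    rw [sFun_sInv C S I J a]
    exact add_self_zmod2 _
  · intro a ha
    by_cases h : (a.2.1 : ℕ) + 1 < (a.2.2 : ℕ)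
    · have e1 : sInv I J a = ⟨a.1.swapAt a.2.1
        (by have := Nat.lt_succ_iff.mp a.2.2.isLt; omega), a.2⟩ := dif_pos h
      rw [e1]
      intro e
      have h2 := congrArg Sigma.fst e
      exact HPath.swapAt_ne a.1 a.2.1 (by have := Nat.lt_succ_iff.mp a.2.2.isLt; omega) h2
    · exfalso
      apply ha
      simp only [sFun]
      rw [if_neg h]
  · intro a
    exact Finset.mem_univ _
  · intro a
    by_cases h : (a.2.1 : ℕ) + 1 < (a.2.2 : ℕ)
    · have hn : (a.2.1 : ℕ) + 2 ≤ a.1.n := by have := Nat.lt_succ_iff.mp a.2.2.isLt; omega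
      have e1 : sInv I J a = ⟨a.1.swapAt a.2.1 hn, a.2⟩ := dif_pos h
      rw [e1]
      have e2 : sInv I J ⟨a.1.swapAt a.2.1 hn, a.2⟩
          = ⟨(a.1.swapAt a.2.1 hn).swapAt a.2.1 hn, a.2⟩ := dif_pos h
      rw [e2]
      exact sigma_fin2_eq (HPath.swapAt_swapAt a.1 a.2.1 hn) rfl rfl
    · have e1 : sInv I J a = a := dif_neg h
      rw [e1, e1]

lemma per_gamma (d : ∀ I J : Fin l → Fin 2, HPath l I J → (C I →ₗ[ZMod 2] C J))
    (hAinf : ∀ (I J : Fin l → Fin 2) (γ : HPath l I J),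
      (∑ k : Fin (γ.n + 1),
          d (γ.v k) (γ.v γ.n)
              (γ.sub (k : ℕ) γ.n (Nat.lt_succ_iff.mp k.isLt) le_rfl) ∘ₗ
            d (γ.v 0) (γ.v k)
              (γ.sub 0 (k : ℕ) (Nat.zero_le _) (Nat.lt_succ_iff.mp k.isLt)))
        = ∑ j : Fin (γ.n + 1), ∑ k : Fin (γ.n + 1),
            if (j : ℕ) + 1 < (k : ℕ) then
              S (γ.v 0) (γ.v j) (γ.v k) (γ.v γ.n)
                (γ.sub 0 (j : ℕ) (Nat.zero_le _) (Nat.lt_succ_iff.mp j.isLt))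
                (γ.sub (k : ℕ) γ.n (Nat.lt_succ_iff.mp k.isLt) le_rfl)
            else 0)
    (γ : HPath l I J) :
    (∑ k : Fin (γ.n + 1),
        d (γ.v k) J ((γ.sub (k : ℕ) γ.n (Nat.lt_succ_iff.mp k.isLt) le_rfl).copy rfl
            (γ.tail γ.n le_rfl)) ∘ₗ
          d I (γ.v k) ((γ.sub 0 (k : ℕ) (Nat.zero_le _)
            (Nat.lt_succ_iff.mp k.isLt)).copy γ.first rfl))
      = ∑ p : Fin (γ.n + 1) × Fin (γ.n + 1), sFun C S I J ⟨γ, p⟩ := by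
  calc
    (∑ k : Fin (γ.n + 1),
        d (γ.v k) J ((γ.sub (k : ℕ) γ.n (Nat.lt_succ_iff.mp k.isLt) le_rfl).copy rfl
            (γ.tail γ.n le_rfl)) ∘ₗ
          d I (γ.v k) ((γ.sub 0 (k : ℕ) (Nat.zero_le _)
            (Nat.lt_succ_iff.mp k.isLt)).copy γ.first rfl))
      = ∑ k : Fin (γ.n + 1),
          conj C γ.first (γ.tail γ.n le_rfl)
            (d (γ.v k) (γ.v γ.n)
                (γ.sub (k : ℕ) γ.n (Nat.lt_succ_iff.mp k.isLt) le_rfl) ∘ₗ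
              d (γ.v 0) (γ.v k)
                (γ.sub 0 (k : ℕ) (Nat.zero_le _) (Nat.lt_succ_iff.mp k.isLt))) :=
      Finset.sum_congr rfl (fun k _ => by
        rw [d_copy C d rfl (γ.tail γ.n le_rfl), d_copy C d γ.first rfl, conj_comp])
    _ = conj C γ.first (γ.tail γ.n le_rfl)
          (∑ k : Fin (γ.n + 1),
            d (γ.v k) (γ.v γ.n)
                (γ.sub (k : ℕ) γ.n (Nat.lt_succ_iff.mp k.isLt) le_rfl) ∘ₗ
              d (γ.v 0) (γ.v k)
                (γ.sub 0 (k : ℕ) (Nat.zero_le _) (Nat.lt_succ_iff.mp k.isLt))) :=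
      (conj_sum C _ _ _ _).symm
    _ = conj C γ.first (γ.tail γ.n le_rfl)
          (∑ j : Fin (γ.n + 1), ∑ k : Fin (γ.n + 1),
            if (j : ℕ) + 1 < (k : ℕ) then
              S (γ.v 0) (γ.v j) (γ.v k) (γ.v γ.n)
                (γ.sub 0 (j : ℕ) (Nat.zero_le _) (Nat.lt_succ_iff.mp j.isLt))
                (γ.sub (k : ℕ) γ.n (Nat.lt_succ_iff.mp k.isLt) le_rfl)
            else 0) := congrArg _ (hAinf I J γ)
    _ = ∑ j : Fin (γ.n + 1), ∑ k : Fin (γ.n + 1), sFun C S I J ⟨γ, (j, k)⟩ := by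
      rw [conj_sum]
      refine Finset.sum_congr rfl (fun j _ => ?_)
      rw [conj_sum]
      refine Finset.sum_congr rfl (fun k _ => ?_)
      simp only [sFun]
      split_ifs with hc
      · rfl
      · exact conj_zero C _ _
    _ = ∑ p : Fin (γ.n + 1) × Fin (γ.n + 1), sFun C S I J ⟨γ, p⟩ := by
      rw [Fintype.sum_prod_type]

end Main

end HPathAux


open HPathAux

/-- **From the `A∞`-type relations for polygon/associahedron maps to a differential.**
Suppose given `F₂`-vector spaces `C I` for the vertices of the hypercube `{0,1}^l`, a
linear map `d γ : C I →ₗ C J` for every hypercube path `γ` from `I` to `J`, and maps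
`S γ₁ γ₂ : C I →ₗ C J` for pairs of paths `γ₁ : I → K₁`, `γ₂ : K₂ → J` (with
`w K₂ - w K₁ ≥ 2`, which is automatic wherever `S` is used below).  If for every path
`γ = (I₀ < ⋯ < I_n)` the relation
`Σ_{k=0}^{n} d γ[k,n] ∘ d γ[0,k] = Σ_{0 ≤ j, j+1 < k ≤ n} S γ[0,j] γ[k,n]`
holds, then `Σ_{I ≤ K ≤ J} d-check(K,J) ∘ d-check(I,K) = 0` for all `I ≤ J`, where
`d-check(I,J) = Σ_{γ ∈ Γ(I,J)} d γ`; i.e. the total map `d-check` is a differential. -/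
theorem dCheck_differential_of_Ainfty_relations {l : ℕ}
    (C : (Fin l → Fin 2) → Type*)
    [∀ I, AddCommGroup (C I)] [∀ I, Module (ZMod 2) (C I)]
    (d : ∀ I J : Fin l → Fin 2, HPath l I J → (C I →ₗ[ZMod 2] C J))
    (S : ∀ I K₁ K₂ J : Fin l → Fin 2,
      HPath l I K₁ → HPath l K₂ J → (C I →ₗ[ZMod 2] C J))
    (hAinf : ∀ (I J : Fin l → Fin 2) (γ : HPath l I J),
      (∑ k : Fin (γ.n + 1),
          d (γ.v k) (γ.v γ.n)
              (γ.sub (k : ℕ) γ.n (Nat.lt_succ_iff.mp k.isLt) le_rfl) ∘ₗ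
            d (γ.v 0) (γ.v k)
              (γ.sub 0 (k : ℕ) (Nat.zero_le _) (Nat.lt_succ_iff.mp k.isLt)))
        = ∑ j : Fin (γ.n + 1), ∑ k : Fin (γ.n + 1),
            if (j : ℕ) + 1 < (k : ℕ) then
              S (γ.v 0) (γ.v j) (γ.v k) (γ.v γ.n)
                (γ.sub 0 (j : ℕ) (Nat.zero_le _) (Nat.lt_succ_iff.mp j.isLt))
                (γ.sub (k : ℕ) γ.n (Nat.lt_succ_iff.mp k.isLt) le_rfl)
            else 0) :
    ∀ I J : Fin l → Fin 2, I ≤ J →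
      (∑ K ∈ Finset.Icc I J,
        (∑ᶠ γ : HPath l K J, d K J γ) ∘ₗ (∑ᶠ γ : HPath l I K, d I K γ)) = 0 := by
  intro I J _hIJ
  classical
  calc
    (∑ K ∈ Finset.Icc I J,
        (∑ᶠ γ : HPath l K J, d K J γ) ∘ₗ (∑ᶠ γ : HPath l I K, d I K γ))
      = ∑ K : Fin l → Fin 2,
          (∑ᶠ γ : HPath l K J, d K J γ) ∘ₗ (∑ᶠ γ : HPath l I K, d I K γ) := by
        apply Finset.sum_subset (Finset.subset_univ _)
        intro K _ hK
        rw [Finset.mem_Icc] at hK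
        by_cases hIK : I ≤ K
        · have hKJ : ¬ K ≤ J := fun h => hK ⟨hIK, h⟩
          have : IsEmpty (HPath l K J) := ⟨fun γ => hKJ γ.endpoints_le⟩
          rw [finsum_of_isEmpty, LinearMap.zero_comp]
        · have : IsEmpty (HPath l I K) := ⟨fun γ => hIK γ.endpoints_le⟩
          rw [finsum_of_isEmpty (fun γ : HPath l I K => d I K γ), LinearMap.comp_zero]
    _ = ∑ K : Fin l → Fin 2, ∑ p : HPath l I K × HPath l K J,
          d K J p.2 ∘ₗ d I K p.1 :=
      Finset.sum_congr rfl (fun K _ => by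
        rw [finsum_eq_sum_of_fintype, finsum_eq_sum_of_fintype, comp_expand])
    _ = ∑ x : (Σ K : Fin l → Fin 2, HPath l I K × HPath l K J),
          d x.1 J x.2.2 ∘ₗ d I x.1 x.2.1 := by
      rw [← Finset.univ_sigma_univ, Finset.sum_sigma]
    _ = ∑ u : (Σ γ : HPath l I J, Fin (γ.n + 1)),
          (d (u.1.v u.2) J ((u.1.sub (u.2 : ℕ) u.1.n (Nat.lt_succ_iff.mp u.2.isLt)
                le_rfl).copy rfl (u.1.tail u.1.n le_rfl)) ∘ₗ
            d I (u.1.v u.2) ((u.1.sub 0 (u.2 : ℕ) (Nat.zero_le _)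
                (Nat.lt_succ_iff.mp u.2.isLt)).copy u.1.first rfl)) :=
      (Fintype.sum_equiv (splitEquiv I J) _ _ (fun u => rfl)).symm
    _ = ∑ γ : HPath l I J, ∑ k : Fin (γ.n + 1),
          (d (γ.v k) J ((γ.sub (k : ℕ) γ.n (Nat.lt_succ_iff.mp k.isLt) le_rfl).copy rfl
              (γ.tail γ.n le_rfl)) ∘ₗ
            d I (γ.v k) ((γ.sub 0 (k : ℕ) (Nat.zero_le _)
              (Nat.lt_succ_iff.mp k.isLt)).copy γ.first rfl)) := by
      rw [← Finset.univ_sigma_univ, Finset.sum_sigma]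
    _ = ∑ γ : HPath l I J, ∑ p : Fin (γ.n + 1) × Fin (γ.n + 1), sFun C S I J ⟨γ, p⟩ :=
      Finset.sum_congr rfl (fun γ _ => per_gamma C S I J d hAinf γ)
    _ = ∑ x : (Σ γ : HPath l I J, Fin (γ.n + 1) × Fin (γ.n + 1)), sFun C S I J x := by
      rw [← Finset.univ_sigma_univ, Finset.sum_sigma]
    _ = 0 := sum_sFun_eq_zero C S I J
end
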